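/- Let C_{HL,c}(α) = sup over measurable sets E ⊆ ℝⁿ with 0 < |E| < ∞ of (1/|E|)·|{x ∈ ℝⁿ : M_{HL,c} χ_E(x) > α}|. Then C_{HL,c}(α) − 1 ∼_n (1/α − 1)^{1/n} as α → 1⁻; that is, there exist constants 0 < c ≤ C depending only on n and a threshold α₀ ∈ (0,1) such that for all α ∈ (α₀, 1), c·(1/α − 1)^{1/n} ≤ C_{HL,c}(α) − 1 ≤ C·(1/α − 1)^{1/n}. In particular lim_{α→1⁻} C_{HL,c}(α) = 1. -/

import Mathlib

open MeasureTheory Set Filter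
open scoped ENNReal

/-- The open axis-parallel cube with lower corner `a` and side length `h`. -/
def openCube {n : ℕ} (a : Fin n → ℝ) (h : ℝ) : Set (Fin n → ℝ) :=
  Set.univ.pi fun i => Set.Ioo (a i) (a i + h)

/-- The uncentered Hardy–Littlewood maximal operator with respect to open
axis-parallel cubes on `ℝⁿ`. -/
noncomputable def MHLc (n : ℕ) (f : (Fin n → ℝ) → ℝ≥0∞) (x : Fin n → ℝ) : ℝ≥0∞ :=
  ⨆ (a : Fin n → ℝ) (h : ℝ) (_ : 0 < h) (_ : x ∈ openCube a h),
    (∫⁻ y in openCube a h, f y) / volume (openCube a h)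

/-- The sharp Tauberian constant `C_{HL,c}(α)` of the uncentered
Hardy–Littlewood maximal operator with respect to cubes. -/
noncomputable def CHLc (n : ℕ) (α : ℝ) : ℝ≥0∞ :=
  ⨆ (E : Set (Fin n → ℝ)) (_ : MeasurableSet E) (_ : 0 < volume E)
    (_ : volume E < ⊤),
    volume {x : Fin n → ℝ | MHLc n (E.indicator 1) x > ENNReal.ofReal α}
      / volume E

namespace Solyanik

/-- interval with A-density > θ -/
def goodPair (A : Set ℝ) (θ : ℝ) (p : ℝ × ℝ) : Prop :=
  ENNReal.ofReal (θ * (p.2 - p.1)) < volume (A ∩ Set.Ioo p.1 p.2)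

lemma goodPair.lt {A : Set ℝ} {θ : ℝ} (hθ : 0 < θ) {p : ℝ × ℝ}
    (h : goodPair A θ p) : p.1 < p.2 := by
  by_contra hc
  push_neg at hc
  unfold goodPair at h
  rw [Set.Ioo_eq_empty (not_lt.mpr hc)] at h
  simp at h

lemma biUnion_Ioo_fin (s : Finset (ℝ × ℝ)) :
    volume (⋃ p ∈ s, Set.Ioo p.1 p.2) ≠ ⊤ := by
  refine ne_top_of_le_ne_top ?_ (measure_biUnion_finset_le s _)
  exact (ENNReal.sum_lt_top.2 fun p _ => by simp [Real.volume_Ioo]).ne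

lemma nu_fin {A : Set ℝ} (hAfin : volume A ≠ ⊤) (X : Set ℝ) : volume (A ∩ X) ≠ ⊤ :=
  ne_top_of_le_ne_top hAfin (measure_mono Set.inter_subset_left)

lemma nu_mono {A : Set ℝ} (hAfin : volume A ≠ ⊤) {X Y : Set ℝ} (h : X ⊆ Y) :
    (volume (A ∩ X)).toReal ≤ (volume (A ∩ Y)).toReal :=
  ENNReal.toReal_mono (nu_fin hAfin Y) (measure_mono (Set.inter_subset_inter_right _ h))

lemma nu_add_le {A : Set ℝ} (hA : MeasurableSet A) (hAfin : volume A ≠ ⊤)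
    {X Y Z : Set ℝ} (hY : MeasurableSet Y)
    (hXY : Disjoint X Y) (hXZ : X ⊆ Z) (hYZ : Y ⊆ Z) :
    (volume (A ∩ X)).toReal + (volume (A ∩ Y)).toReal ≤ (volume (A ∩ Z)).toReal := by
  rw [← ENNReal.toReal_add (nu_fin hAfin X) (nu_fin hAfin Y),
    ← measure_union (hXY.mono Set.inter_subset_right Set.inter_subset_right) (hA.inter hY)]
  exact ENNReal.toReal_mono (nu_fin hAfin Z)
    (measure_mono (by rw [← Set.inter_union_distrib_left]
                      exact Set.inter_subset_inter_right _ (Set.union_subset hXZ hYZ)))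

lemma nu_le_len {A : Set ℝ} {a b : ℝ} (hab : a ≤ b) :
    (volume (A ∩ Set.Ioo a b)).toReal ≤ b - a := by
  have h1 : volume (A ∩ Set.Ioo a b) ≤ ENNReal.ofReal (b - a) := by
    refine le_trans (measure_mono Set.inter_subset_right) ?_
    simp [Real.volume_Ioo]
  calc (volume (A ∩ Set.Ioo a b)).toReal ≤ (ENNReal.ofReal (b - a)).toReal :=
        ENNReal.toReal_mono ENNReal.ofReal_ne_top h1
    _ = b - a := ENNReal.toReal_ofReal (by linarith)

lemma goodPair.real {A : Set ℝ} (hAfin : volume A ≠ ⊤) {θ : ℝ} (hθ : 0 < θ)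
    {p : ℝ × ℝ} (h : goodPair A θ p) :
    θ * (p.2 - p.1) < (volume (A ∩ Set.Ioo p.1 p.2)).toReal := by
  rw [← ENNReal.ofReal_lt_iff_lt_toReal ?h0 (nu_fin hAfin _)]
  · exact h
  case h0 =>
    have h2 := h.lt hθ
    nlinarith

end Solyanik

namespace Solyanik

lemma claim2 {A : Set ℝ} (hA : MeasurableSet A) (hAfin : volume A ≠ ⊤)
    {θ : ℝ} (hθ0 : 0 < θ) (hθ1 : θ ≤ 1) (s : Finset (ℝ × ℝ)) :
    s.Nonempty →
    (∀ p ∈ s, goodPair A θ p) →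
    (∀ p ∈ s, ¬(Set.Ioo p.1 p.2 ⊆ ⋃ q ∈ s.erase p, Set.Ioo q.1 q.2)) →
    ∃ pstar ∈ s, ∃ O : ℝ,
      (∀ q ∈ s, q.1 ≤ pstar.1) ∧ (∀ q ∈ s, q.2 ≤ pstar.2) ∧
      (O ≤ pstar.1 ∨ ∃ q ∈ s, q.1 < pstar.1 ∧ O ≤ q.2) ∧
      (volume (⋃ p ∈ s, Set.Ioo p.1 p.2)).toReal ≤
        (1/θ) * (volume (A ∩ Set.Iio pstar.2)).toReal
          + (1/θ - 1) * (volume (A ∩ Set.Iio O)).toReal := by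
  have h1θ : 1 ≤ 1/θ := by rw [le_div_iff₀ hθ0]; linarith
  induction s using Finset.strongInduction with
  | _ s ih =>
  intro hne hgood hirr
  have hinj : ∀ p ∈ s, ∀ q ∈ s, p ≠ q → p.1 ≠ q.1 := by
    intro p hp q hq hpq h1
    rcases le_total p.2 q.2 with h2 | h2
    · exact hirr p hp (subset_trans (by rw [h1]; exact Set.Ioo_subset_Ioo_right h2)
        (Set.subset_biUnion_of_mem (Finset.mem_erase.mpr ⟨hpq.symm, hq⟩)))
    · exact hirr q hq (subset_trans (by rw [← h1]; exact Set.Ioo_subset_Ioo_right h2)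
        (Set.subset_biUnion_of_mem (Finset.mem_erase.mpr ⟨hpq, hp⟩)))
  obtain ⟨pstar, hps, hpa⟩ := Finset.mem_image.mp
    ((s.image Prod.fst).max'_mem (hne.image _))
  have hamax : ∀ q ∈ s, q.1 ≤ pstar.1 := fun q hq => by
    rw [hpa]; exact Finset.le_max' _ _ (Finset.mem_image_of_mem _ hq)
  have hastrict : ∀ q ∈ s, q ≠ pstar → q.1 < pstar.1 := fun q hq hqp =>
    lt_of_le_of_ne (hamax q hq) (hinj q hq pstar hps hqp)
  have hltp : pstar.1 < pstar.2 := (hgood pstar hps).lt hθ0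
  have hbmax : ∀ q ∈ s, q.2 ≤ pstar.2 := by
    intro q hq
    by_contra hc
    push_neg at hc
    rcases eq_or_ne q pstar with rfl | hqp
    · exact absurd rfl hc.ne'
    · refine hirr pstar hps fun t ht => Set.mem_biUnion
        (Finset.mem_erase.mpr ⟨hqp, hq⟩)
        (Set.Ioo_subset_Ioo (hastrict q hq hqp).le hc.le ht)
  by_cases hs' : (s.erase pstar).Nonempty
  · -- inductive step
    have hsub : s.erase pstar ⊂ s := Finset.erase_ssubset hps
    have hgood' : ∀ p ∈ s.erase pstar, goodPair A θ p := fun p hp =>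
      hgood p (Finset.mem_of_mem_erase hp)
    have hirr' : ∀ p ∈ s.erase pstar,
        ¬(Set.Ioo p.1 p.2 ⊆ ⋃ q ∈ (s.erase pstar).erase p, Set.Ioo q.1 q.2) := by
      intro p hp hsubp
      refine hirr p (Finset.mem_of_mem_erase hp) (hsubp.trans ?_)
      refine Set.biUnion_subset_biUnion_left ?_
      intro q hq
      exact Finset.mem_erase.mpr ⟨(Finset.mem_erase.mp hq).1,
        Finset.mem_of_mem_erase (Finset.mem_erase.mp hq).2⟩
    obtain ⟨p', hp's, O', ha', hb', hO'exp, hbound'⟩ := ih _ hsub hs' hgood' hirr'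
    have hp'mem : p' ∈ s := Finset.mem_of_mem_erase hp's
    have hp'ne : p' ≠ pstar := (Finset.mem_erase.mp hp's).1
    have hA1 : p'.1 < pstar.1 := hastrict p' hp'mem hp'ne
    have hB2 : p'.2 ≤ pstar.2 := hbmax p' hp'mem
    have hltp' : p'.1 < p'.2 := (hgood p' hp'mem).lt hθ0
    -- key : O' ≤ pstar.1 (triple argument)
    have hO'a : O' ≤ pstar.1 := by
      rcases hO'exp with h | ⟨q, hqs', hq1, hq2⟩
      · linarith
      · have hqs : q ∈ s := Finset.mem_of_mem_erase hqs'
        have hq1s : q.1 < pstar.1 := hq1.trans hA1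
        have hqnep' : q ≠ p' := fun h => absurd (h ▸ hq1) (lt_irrefl _)
        have hkey : q.2 ≤ pstar.1 := by
          by_contra hc
          push_neg at hc
          refine hirr p' hp'mem ?_
          intro t ht
          by_cases htq : t < q.2
          · exact Set.mem_biUnion (Finset.mem_erase.mpr ⟨hqnep', hqs⟩)
              ⟨hq1.trans ht.1, htq⟩
          · push_neg at htq
            exact Set.mem_biUnion (Finset.mem_erase.mpr ⟨hp'ne.symm, hps⟩)
              ⟨lt_of_lt_of_le hc htq, lt_of_lt_of_le ht.2 hB2⟩
        linarith
    set O := max pstar.1 p'.2 with hOdef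
    have hOb : O ≤ pstar.2 := max_le hltp.le hB2
    have haO : pstar.1 ≤ O := le_max_left _ _
    have hp'2O : p'.2 ≤ O := le_max_right _ _
    have hnew : Set.Ioo pstar.1 pstar.2 \ (⋃ q ∈ s.erase pstar, Set.Ioo q.1 q.2)
        ⊆ Set.Ico O pstar.2 := by
      rintro t ⟨⟨ht1, ht2⟩, htn⟩
      refine ⟨max_le ht1.le ?_, ht2⟩
      by_contra hcc
      push_neg at hcc
      exact htn (Set.mem_biUnion hp's ⟨hA1.trans ht1, hcc⟩)
    have hUsplit : volume (⋃ p ∈ s, Set.Ioo p.1 p.2) ≤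
        volume (⋃ q ∈ s.erase pstar, Set.Ioo q.1 q.2) + ENNReal.ofReal (pstar.2 - O) := by
      have hseq : (⋃ p ∈ s, Set.Ioo p.1 p.2) =
          (⋃ q ∈ s.erase pstar, Set.Ioo q.1 q.2) ∪ Set.Ioo pstar.1 pstar.2 := by
        conv_lhs => rw [← Finset.insert_erase hps]
        rw [Finset.set_biUnion_insert]
        exact Set.union_comm _ _
      rw [hseq, ← Set.union_diff_self]
      refine le_trans (measure_union_le _ _) ?_
      gcongr
      refine le_trans (measure_mono hnew) ?_
      simp [Real.volume_Ico]
    have hXs : (volume (⋃ p ∈ s, Set.Ioo p.1 p.2)).toReal ≤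
        (volume (⋃ q ∈ s.erase pstar, Set.Ioo q.1 q.2)).toReal + (pstar.2 - O) := by
      have h2 := ENNReal.toReal_mono
        (ENNReal.add_ne_top.mpr ⟨biUnion_Ioo_fin _, ENNReal.ofReal_ne_top⟩) hUsplit
      rwa [ENNReal.toReal_add (biUnion_Ioo_fin _) ENNReal.ofReal_ne_top,
        ENNReal.toReal_ofReal (by linarith)] at h2
    have husplit : (volume (A ∩ Set.Ioo pstar.1 pstar.2)).toReal ≤
        (volume (A ∩ Set.Ioo pstar.1 O)).toReal
          + (volume (A ∩ Set.Ico O pstar.2)).toReal := by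
      rw [← ENNReal.toReal_add (nu_fin hAfin _) (nu_fin hAfin _)]
      refine ENNReal.toReal_mono
        (ENNReal.add_ne_top.mpr ⟨nu_fin hAfin _, nu_fin hAfin _⟩) ?_
      refine le_trans (measure_mono ?_) (measure_union_le _ _)
      rintro x ⟨hxA, hx1, hx2⟩
      by_cases hxO : x < O
      · exact Or.inl ⟨hxA, hx1, hxO⟩
      · exact Or.inr ⟨hxA, le_of_not_gt hxO, hx2⟩
    have hu_len : (volume (A ∩ Set.Ioo pstar.1 O)).toReal ≤ O - pstar.1 := nu_le_len haO
    have hgp : θ * (pstar.2 - pstar.1) ≤ (volume (A ∩ Set.Ioo pstar.1 pstar.2)).toReal :=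
      (goodPair.real hAfin hθ0 (hgood pstar hps)).le
    have hm5 : (volume (A ∩ Set.Iio p'.2)).toReal
          + (volume (A ∩ Set.Ico O pstar.2)).toReal
        ≤ (volume (A ∩ Set.Iio pstar.2)).toReal := by
      refine nu_add_le hA hAfin measurableSet_Ico ?_ ?_ ?_
      · exact Set.disjoint_left.mpr fun x hx hx2 =>
          absurd (lt_of_lt_of_le hx hp'2O) (not_lt.mpr hx2.1)
      · exact fun x hx => lt_of_lt_of_le hx (hp'2O.trans hOb)
      · exact fun x hx => hx.2
    have hm6 : (volume (A ∩ Set.Iio O')).toReal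
          + (volume (A ∩ Set.Ioo pstar.1 O)).toReal
        ≤ (volume (A ∩ Set.Iio O)).toReal := by
      refine nu_add_le hA hAfin measurableSet_Ioo ?_ ?_ ?_
      · exact Set.disjoint_left.mpr fun x hx hx2 =>
          absurd (lt_of_lt_of_le hx hO'a) (not_lt.mpr hx2.1.le)
      · exact fun x hx => lt_of_lt_of_le hx (hO'a.trans haO)
      · exact fun x hx => hx.2
    have hdiv : pstar.2 - pstar.1 ≤ (1/θ) * ((volume (A ∩ Set.Ioo pstar.1 O)).toReal
        + (volume (A ∩ Set.Ico O pstar.2)).toReal) := by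
      rw [one_div, inv_mul_eq_div, le_div_iff₀ hθ0]
      nlinarith [husplit, hgp]
    have hmul5 : (1/θ) * ((volume (A ∩ Set.Iio p'.2)).toReal
          + (volume (A ∩ Set.Ico O pstar.2)).toReal)
        ≤ (1/θ) * (volume (A ∩ Set.Iio pstar.2)).toReal :=
      mul_le_mul_of_nonneg_left hm5 (by positivity)
    have hmul6 : (1/θ - 1) * ((volume (A ∩ Set.Iio O')).toReal
          + (volume (A ∩ Set.Ioo pstar.1 O)).toReal)
        ≤ (1/θ - 1) * (volume (A ∩ Set.Iio O)).toReal :=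
      mul_le_mul_of_nonneg_left hm6 (by linarith)
    refine ⟨pstar, hps, O, hamax, hbmax, ?_, ?_⟩
    · by_cases hcase : p'.2 ≤ pstar.1
      · exact Or.inl (max_le le_rfl hcase)
      · exact Or.inr ⟨p', hp'mem, hA1, max_le (le_of_not_ge hcase) le_rfl⟩
    · nlinarith [hXs, hbound', hdiv, hu_len, hmul5, hmul6]
  · -- base case : s = {pstar}
    have hsing : s = {pstar} := by
      rcases (Finset.erase_eq_empty_iff s pstar).mp (Finset.not_nonempty_iff_eq_empty.mp hs')
        with h | h
      · exact absurd h (Finset.nonempty_iff_ne_empty.mp hne)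
      · exact h
    refine ⟨pstar, hps, pstar.1, hamax, hbmax, Or.inl le_rfl, ?_⟩
    have hU : (⋃ p ∈ s, Set.Ioo p.1 p.2) = Set.Ioo pstar.1 pstar.2 := by
      rw [hsing]; simp
    rw [hU, Real.volume_Ioo, ENNReal.toReal_ofReal (by linarith)]
    have hgp := goodPair.real hAfin hθ0 (hgood pstar hps)
    have hsubn : (volume (A ∩ Set.Ioo pstar.1 pstar.2)).toReal
        ≤ (volume (A ∩ Set.Iio pstar.2)).toReal :=
      nu_mono hAfin Set.Ioo_subset_Iio_self
    have hnn : 0 ≤ (volume (A ∩ Set.Iio pstar.1)).toReal := ENNReal.toReal_nonneg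
    have key : pstar.2 - pstar.1 ≤ (1/θ) * (volume (A ∩ Set.Iio pstar.2)).toReal := by
      rw [one_div, inv_mul_eq_div, le_div_iff₀ hθ0]
      nlinarith [hgp, hsubn]
    nlinarith [key, hnn, h1θ]

end Solyanik

namespace Solyanik

lemma two_div_sub_one_pos {θ : ℝ} (hθ0 : 0 < θ) (hθ1 : θ ≤ 1) : 0 < 2/θ - 1 := by
  have h1θ : 1 ≤ 1/θ := by rw [le_div_iff₀ hθ0]; linarith
  have : 2/θ = 2 * (1/θ) := by ring
  linarith

lemma finite_cover_bound {A : Set ℝ} (hA : MeasurableSet A) (hAfin : volume A ≠ ⊤)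
    {θ : ℝ} (hθ0 : 0 < θ) (hθ1 : θ ≤ 1) :
    ∀ N (s : Finset (ℝ × ℝ)), s.card ≤ N → (∀ p ∈ s, goodPair A θ p) →
    volume (⋃ p ∈ s, Set.Ioo p.1 p.2) ≤ ENNReal.ofReal (2/θ - 1) * volume A := by
  intro N
  induction N with
  | zero =>
    intro s hcard _
    have : s = ∅ := Finset.card_eq_zero.mp (le_antisymm hcard (Nat.zero_le _))
    simp [this]
  | succ N ihN =>
    intro s hcard hgood
    by_cases hred : ∃ p ∈ s, Set.Ioo p.1 p.2 ⊆ ⋃ q ∈ s.erase p, Set.Ioo q.1 q.2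
    · obtain ⟨p, hp, hsubp⟩ := hred
      have hUeq : (⋃ q ∈ s, Set.Ioo q.1 q.2) = ⋃ q ∈ s.erase p, Set.Ioo q.1 q.2 := by
        apply Set.Subset.antisymm
        · intro t ht
          rw [Set.mem_iUnion₂] at ht
          obtain ⟨q, hq, htq⟩ := ht
          rcases eq_or_ne q p with rfl | hqp
          · exact hsubp htq
          · exact Set.mem_biUnion (Finset.mem_erase.mpr ⟨hqp, hq⟩) htq
        · exact Set.biUnion_subset_biUnion_left (fun q hq => Finset.mem_of_mem_erase hq)
      rw [hUeq]
      exact ihN _ (by have := Finset.card_erase_of_mem hp; omega)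
        (fun q hq => hgood q (Finset.mem_of_mem_erase hq))
    · push_neg at hred
      rcases Finset.eq_empty_or_nonempty s with rfl | hne
      · simp
      obtain ⟨pstar, hps, O, _, _, _, hbound⟩ := claim2 hA hAfin hθ0 hθ1 s hne hgood hred
      have hfin := biUnion_Ioo_fin s
      have h1θ : 1 ≤ 1/θ := by rw [le_div_iff₀ hθ0]; linarith
      have h2 : (volume (⋃ p ∈ s, Set.Ioo p.1 p.2)).toReal
          ≤ (2/θ - 1) * (volume A).toReal := by
        have hb : (volume (A ∩ Set.Iio pstar.2)).toReal ≤ (volume A).toReal :=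
          ENNReal.toReal_mono hAfin (measure_mono Set.inter_subset_left)
        have hO : (volume (A ∩ Set.Iio O)).toReal ≤ (volume A).toReal :=
          ENNReal.toReal_mono hAfin (measure_mono Set.inter_subset_left)
        have hmb : (1/θ) * (volume (A ∩ Set.Iio pstar.2)).toReal
            ≤ (1/θ) * (volume A).toReal := mul_le_mul_of_nonneg_left hb (by positivity)
        have hmO : (1/θ - 1) * (volume (A ∩ Set.Iio O)).toReal
            ≤ (1/θ - 1) * (volume A).toReal := mul_le_mul_of_nonneg_left hO (by linarith)
        have hring : (1/θ) * (volume A).toReal + (1/θ - 1) * (volume A).toReal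
            = (2/θ - 1) * (volume A).toReal := by ring
        linarith [hbound]
      calc volume (⋃ p ∈ s, Set.Ioo p.1 p.2)
          = ENNReal.ofReal (volume (⋃ p ∈ s, Set.Ioo p.1 p.2)).toReal :=
            (ENNReal.ofReal_toReal hfin).symm
        _ ≤ ENNReal.ofReal ((2/θ - 1) * (volume A).toReal) := ENNReal.ofReal_le_ofReal h2
        _ = ENNReal.ofReal (2/θ - 1) * ENNReal.ofReal (volume A).toReal := by
            rw [ENNReal.ofReal_mul (two_div_sub_one_pos hθ0 hθ1).le]
        _ = ENNReal.ofReal (2/θ - 1) * volume A := by rw [ENNReal.ofReal_toReal hAfin]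

/-- The sharp 1-D Tauberian covering estimate. -/
lemma oneD_maximal_bound {A : Set ℝ} (hA : MeasurableSet A) {θ : ℝ}
    (hθ0 : 0 < θ) (hθ1 : θ ≤ 1) :
    volume {t : ℝ | ∃ a b : ℝ, a < t ∧ t < b ∧ goodPair A θ (a, b)}
      ≤ ENNReal.ofReal (2/θ - 1) * volume A := by
  by_cases hAfin : volume A = ⊤
  · rw [hAfin, ENNReal.mul_top (by
      simp only [ne_eq, ENNReal.ofReal_eq_zero, not_le]
      exact two_div_sub_one_pos hθ0 hθ1)]
    exact le_top
  · have hUeq : {t : ℝ | ∃ a b : ℝ, a < t ∧ t < b ∧ goodPair A θ (a, b)} =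
        ⋃ (p : {p : ℝ × ℝ // goodPair A θ p}), Set.Ioo p.1.1 p.1.2 := by
      ext t
      simp only [Set.mem_setOf_eq, Set.mem_iUnion, Set.mem_Ioo]
      exact ⟨fun ⟨a, b, h1, h2, h3⟩ => ⟨⟨(a, b), h3⟩, h1, h2⟩,
             fun ⟨p, h1, h2⟩ => ⟨p.1.1, p.1.2, h1, h2, by rcases p with ⟨⟨a,b⟩,h⟩; exact h⟩⟩
    rw [hUeq]
    have hopen : IsOpen (⋃ (p : {p : ℝ × ℝ // goodPair A θ p}), Set.Ioo p.1.1 p.1.2) :=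
      isOpen_iUnion fun p => isOpen_Ioo
    rw [hopen.measure_eq_iSup_isCompact]
    refine iSup_le fun K => iSup_le fun hKsub => iSup_le fun hK => ?_
    obtain ⟨t, ht⟩ := hK.elim_finite_subcover
      (fun p : {p : ℝ × ℝ // goodPair A θ p} => Set.Ioo p.1.1 p.1.2)
      (fun p => isOpen_Ioo) hKsub
    have hKsub2 : K ⊆ ⋃ p ∈ t.image Subtype.val, Set.Ioo p.1 p.2 := by
      intro x hx
      obtain ⟨i, hi, hxi⟩ := Set.mem_iUnion₂.mp (ht hx)
      exact Set.mem_biUnion (Finset.mem_image_of_mem _ hi) hxi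
    refine le_trans (measure_mono hKsub2) ?_
    refine finite_cover_bound hA hAfin hθ0 hθ1 _ _ le_rfl ?_
    intro p hp
    obtain ⟨i, _, rfl⟩ := Finset.mem_image.mp hp
    exact i.2

end Solyanik

namespace Solyanik

variable {n : ℕ}

/-- the 1-D fiber of a set through `x` in direction `k` -/
def fiber (S : Set (Fin n → ℝ)) (k : Fin n) (x : Fin n → ℝ) : Set ℝ :=
  Function.update x k ⁻¹' S

lemma fiber_measurable {S : Set (Fin n → ℝ)} (hS : MeasurableSet S) (k : Fin n)
    (x : Fin n → ℝ) : MeasurableSet (fiber S k x) :=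
  hS.preimage (measurable_update x)

lemma fiber_update {S : Set (Fin n → ℝ)} (k : Fin n) (x : Fin n → ℝ) (t : ℝ) :
    fiber S k (Function.update x k t) = fiber S k x := by
  ext u
  simp only [fiber, Set.mem_preimage, Function.update_idem]

/-- the "one-dimensional sweep" of a set in coordinate direction `k` at density `θ` -/
def sweep (S : Set (Fin n → ℝ)) (k : Fin n) (θ : ℝ) : Set (Fin n → ℝ) :=
  {x | ∃ a b : ℝ, a < x k ∧ x k < b ∧ goodPair (fiber S k x) θ (a, b)}

lemma fiber_sweep {S : Set (Fin n → ℝ)} (k : Fin n) (θ : ℝ) (y : Fin n → ℝ) :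
    fiber (sweep S k θ) k y =
      {t : ℝ | ∃ a b : ℝ, a < t ∧ t < b ∧ goodPair (fiber S k y) θ (a, b)} := by
  ext t
  have hupd : Function.update (Function.update y k t) k = Function.update y k :=
    funext fun w => Function.update_idem _ _ _
  simp only [fiber, Set.mem_preimage, sweep, Set.mem_setOf_eq, Function.update_self, hupd]

/-- `x ↦ volume (fiber S k x ∩ Ioo q r)` as an `lmarginal`. -/
lemma fiber_vol_eq_lmarginal {S : Set (Fin n → ℝ)} (hS : MeasurableSet S) (k : Fin n)
    (q r : ℝ) (x : Fin n → ℝ) :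
    volume (fiber S k x ∩ Set.Ioo q r) =
      (∫⋯∫⁻_{k}, (S ∩ {y | y k ∈ Set.Ioo q r}).indicator 1 ∂(fun _ => volume)) x := by
  rw [MeasureTheory.lmarginal_singleton]
  have : ∀ t : ℝ, (S ∩ {y | y k ∈ Set.Ioo q r}).indicator
      (1 : (Fin n → ℝ) → ℝ≥0∞) (Function.update x k t)
      = (fiber S k x ∩ Set.Ioo q r).indicator 1 t := by
    intro t
    by_cases ht : t ∈ fiber S k x ∩ Set.Ioo q r
    · rw [Set.indicator_of_mem ht, Set.indicator_of_mem]
      · rfl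
      · exact ⟨ht.1, by simpa using ht.2⟩
    · rw [Set.indicator_of_notMem ht, Set.indicator_of_notMem]
      intro hmem
      exact ht ⟨hmem.1, by simpa using hmem.2⟩
  simp_rw [this]
  rw [MeasureTheory.lintegral_indicator_one
    ((fiber_measurable hS k x).inter measurableSet_Ioo)]

lemma sweep_measurable {S : Set (Fin n → ℝ)} (hS : MeasurableSet S) (k : Fin n)
    {θ : ℝ} (hθ0 : 0 < θ) : MeasurableSet (sweep S k θ) := by
  have hrep : sweep S k θ = ⋃ (q : ℚ) (r : ℚ),
      ({x : Fin n → ℝ | (q : ℝ) < x k} ∩ {x | x k < (r : ℝ)} ∩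
        {x | ENNReal.ofReal (θ * ((r : ℝ) - (q : ℝ)))
          < volume (fiber S k x ∩ Set.Ioo (q : ℝ) (r : ℝ))}) := by
    ext x
    simp only [sweep, Set.mem_setOf_eq, Set.mem_iUnion, Set.mem_inter_iff]
    constructor
    · rintro ⟨a, b, hax, hxb, hgp⟩
      -- strict inequality: pass to slightly smaller rational interval
      have hfin : volume (fiber S k x ∩ Set.Ioo a b) ≠ ⊤ := by
        refine ne_top_of_le_ne_top ?_ (measure_mono Set.inter_subset_right)
        simp [Real.volume_Ioo]
      have hab : a < b := hax.trans hxb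
      set v := (volume (fiber S k x ∩ Set.Ioo a b)).toReal with hv
      have hgpv : θ * (b - a) < v := by
        rw [hv, ← ENNReal.ofReal_lt_iff_lt_toReal (by nlinarith) hfin]
        exact hgp
      set δ := (v - θ * (b - a)) / 4 with hδ
      have hδ0 : 0 < δ := by simp only [hδ]; linarith
      obtain ⟨q, hq1, hq2⟩ := exists_rat_btwn (lt_min hax (by linarith : a < a + δ))
      obtain ⟨r, hr1, hr2⟩ := exists_rat_btwn (max_lt hxb (by linarith : b - δ < b))
      rw [lt_min_iff] at hq2
      rw [max_lt_iff] at hr1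
      refine ⟨q, r, ⟨hq2.1, hr1.1⟩, ?_⟩
      have hsub : volume (fiber S k x ∩ Set.Ioo a b) ≤
          volume (fiber S k x ∩ Set.Ioo (q : ℝ) (r : ℝ))
            + (ENNReal.ofReal ((q : ℝ) - a) + ENNReal.ofReal (b - (r : ℝ))) := by
        have hcover : fiber S k x ∩ Set.Ioo a b ⊆
            (fiber S k x ∩ Set.Ioo (q : ℝ) (r : ℝ)) ∪ (Set.Ioc a (q : ℝ) ∪ Set.Ico (r : ℝ) b) := by
          rintro t ⟨htf, hta, htb⟩
          by_cases h1 : t ≤ (q : ℝ)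
          · exact Or.inr (Or.inl ⟨hta, h1⟩)
          · by_cases h2 : (r : ℝ) ≤ t
            · exact Or.inr (Or.inr ⟨h2, htb⟩)
            · exact Or.inl ⟨htf, lt_of_not_ge h1, lt_of_not_ge h2⟩
        refine le_trans (measure_mono hcover) ?_
        refine le_trans (measure_union_le _ _) ?_
        gcongr
        refine le_trans (measure_union_le _ _) ?_
        gcongr <;> simp [Real.volume_Ioc, Real.volume_Ico]
      have hfin2 : volume (fiber S k x ∩ Set.Ioo (q : ℝ) (r : ℝ)) ≠ ⊤ := by
        refine ne_top_of_le_ne_top ?_ (measure_mono Set.inter_subset_right)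
        simp [Real.volume_Ioo]
      set v' := (volume (fiber S k x ∩ Set.Ioo (q : ℝ) (r : ℝ))).toReal with hv'
      have hsubr : v ≤ v' + (((q : ℝ) - a) + (b - (r : ℝ))) := by
        have := ENNReal.toReal_mono (by
          refine ENNReal.add_ne_top.mpr ⟨hfin2, ENNReal.add_ne_top.mpr ⟨?_, ?_⟩⟩ <;>
            exact ENNReal.ofReal_ne_top) hsub
        rwa [ENNReal.toReal_add hfin2 (ENNReal.add_ne_top.mpr
            ⟨ENNReal.ofReal_ne_top, ENNReal.ofReal_ne_top⟩),
          ENNReal.toReal_add ENNReal.ofReal_ne_top ENNReal.ofReal_ne_top,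
          ENNReal.toReal_ofReal (by linarith), ENNReal.toReal_ofReal (by linarith)] at this
      have hqr : (q : ℝ) < (r : ℝ) := hq2.1.trans hr1.1
      rw [ENNReal.ofReal_lt_iff_lt_toReal (by nlinarith) hfin2, ← hv']
      have h5 : θ * ((r : ℝ) - (q : ℝ)) ≤ θ * (b - a) := by
        have : (r : ℝ) - (q : ℝ) ≤ b - a := by
          have := hq1
          have := hr2
          linarith
        nlinarith
      nlinarith [hq2.2, hr1.2]
    · rintro ⟨q, r, ⟨hq, hr⟩, hgp⟩
      exact ⟨q, r, hq, hr, hgp⟩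
  rw [hrep]
  refine MeasurableSet.iUnion fun q => MeasurableSet.iUnion fun r => ?_
  refine MeasurableSet.inter (MeasurableSet.inter ?_ ?_) ?_
  · exact measurableSet_lt measurable_const (measurable_pi_apply k)
  · exact measurableSet_lt (measurable_pi_apply k) measurable_const
  · have hmeas : Measurable fun x : Fin n → ℝ =>
        volume (fiber S k x ∩ Set.Ioo (q : ℝ) (r : ℝ)) := by
      have := Measurable.lmarginal (μ := fun _ : Fin n => (volume : Measure ℝ))
        (s := {k}) (f := (S ∩ {y | y k ∈ Set.Ioo (q : ℝ) (r : ℝ)}).indicator 1)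
        (by
          refine Measurable.indicator measurable_one ?_
          exact hS.inter ((measurable_pi_apply k) measurableSet_Ioo))
      have heq : (fun x : Fin n → ℝ => volume (fiber S k x ∩ Set.Ioo (q : ℝ) (r : ℝ)))
          = (∫⋯∫⁻_{k}, (S ∩ {y | y k ∈ Set.Ioo (q : ℝ) (r : ℝ)}).indicator 1
              ∂(fun _ => volume)) := by
        funext x
        exact fiber_vol_eq_lmarginal hS k (q : ℝ) (r : ℝ) x
      rw [heq]
      exact this
    exact measurableSet_lt measurable_const hmeas

end Solyanik

namespace Solyanik

lemma lmarginal_const_mul' {f : (Fin n → ℝ) → ℝ≥0∞} (hf : Measurable f) (c : ℝ≥0∞)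
    (s : Finset (Fin n)) :
    (∫⋯∫⁻_s, (fun y => c * f y) ∂(fun _ => volume)) =
      fun x => c * (∫⋯∫⁻_s, f ∂(fun _ => volume)) x := by
  induction s using Finset.induction with
  | empty => funext x; simp [MeasureTheory.lmarginal_empty]
  | @insert i s hi ih =>
    funext x
    rw [MeasureTheory.lmarginal_insert _ (hf.const_mul c) hi,
      MeasureTheory.lmarginal_insert _ hf hi]
    simp_rw [congrFun ih]
    exact MeasureTheory.lintegral_const_mul c
      ((hf.lmarginal _).comp (measurable_update x))

lemma indicator_fiber_eq {T : Set (Fin n → ℝ)} (k : Fin n) (y : Fin n → ℝ) (t : ℝ) :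
    T.indicator (1 : (Fin n → ℝ) → ℝ≥0∞) (Function.update y k t)
      = (fiber T k y).indicator 1 t := by
  simp only [Set.indicator, fiber, Set.mem_preimage, Pi.one_apply]
  congr 1

lemma lintegral_update_indicator {T : Set (Fin n → ℝ)} (hT : MeasurableSet T)
    (k : Fin n) (y : Fin n → ℝ) :
    ∫⁻ t : ℝ, T.indicator 1 (Function.update y k t) = volume (fiber T k y) := by
  simp_rw [indicator_fiber_eq]
  exact MeasureTheory.lintegral_indicator_one (fiber_measurable hT k y)

lemma sweep_volume {S : Set (Fin n → ℝ)} (hS : MeasurableSet S) (k : Fin n)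
    {θ : ℝ} (hθ0 : 0 < θ) (hθ1 : θ ≤ 1) :
    volume (sweep S k θ) ≤ ENNReal.ofReal (2/θ - 1) * volume S := by
  have hsw : MeasurableSet (sweep S k θ) := sweep_measurable hS k hθ0
  have hu : (Finset.univ.erase k) ∪ {k} = (Finset.univ : Finset (Fin n)) := by
    ext i; by_cases h : i = k <;> simp [h]
  have hχsw : Measurable ((sweep S k θ).indicator (1 : (Fin n → ℝ) → ℝ≥0∞)) :=
    measurable_one.indicator hsw
  have hχS : Measurable (S.indicator (1 : (Fin n → ℝ) → ℝ≥0∞)) :=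
    measurable_one.indicator hS
  have hdisj : Disjoint (Finset.univ.erase k) ({k} : Finset (Fin n)) :=
    Finset.disjoint_singleton_right.mpr (Finset.notMem_erase k _)
  set x0 : Fin n → ℝ := fun _ => 0 with hx0
  have hpt : ∀ y : Fin n → ℝ,
      (∫⋯∫⁻_{k}, (sweep S k θ).indicator 1 ∂(fun _ => volume)) y
        ≤ ENNReal.ofReal (2/θ - 1)
            * (∫⋯∫⁻_{k}, S.indicator 1 ∂(fun _ => volume)) y := by
    intro y
    rw [MeasureTheory.lmarginal_singleton, MeasureTheory.lmarginal_singleton]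
    dsimp only
    rw [lintegral_update_indicator hsw k y, lintegral_update_indicator hS k y,
      fiber_sweep]
    exact oneD_maximal_bound (fiber_measurable hS k y) hθ0 hθ1
  calc volume (sweep S k θ)
      = ∫⁻ x, (sweep S k θ).indicator 1 x := (lintegral_indicator_one hsw).symm
    _ = (∫⋯∫⁻_Finset.univ, (sweep S k θ).indicator 1 ∂(fun _ => volume)) x0 := by
        rw [volume_pi, MeasureTheory.lintegral_eq_lmarginal_univ x0]
    _ = (∫⋯∫⁻_(Finset.univ.erase k),
          (∫⋯∫⁻_{k}, (sweep S k θ).indicator 1 ∂(fun _ => volume))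
            ∂(fun _ => volume)) x0 := by
        conv_lhs => rw [← hu]
        rw [MeasureTheory.lmarginal_union _ _ hχsw hdisj]
    _ ≤ (∫⋯∫⁻_(Finset.univ.erase k),
          (fun y => ENNReal.ofReal (2/θ - 1)
            * (∫⋯∫⁻_{k}, S.indicator 1 ∂(fun _ => volume)) y)
            ∂(fun _ => volume)) x0 :=
        MeasureTheory.lmarginal_mono (fun y => hpt y) x0
    _ = ENNReal.ofReal (2/θ - 1)
          * (∫⋯∫⁻_(Finset.univ.erase k),
              (∫⋯∫⁻_{k}, S.indicator 1 ∂(fun _ => volume)) ∂(fun _ => volume)) x0 :=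
        congrFun (lmarginal_const_mul' (hχS.lmarginal _) _ _) x0
    _ = ENNReal.ofReal (2/θ - 1)
          * (∫⋯∫⁻_Finset.univ, S.indicator 1 ∂(fun _ => volume)) x0 := by
        rw [← MeasureTheory.lmarginal_union _ _ hχS hdisj]
        conv_lhs => rw [hu]
    _ = ENNReal.ofReal (2/θ - 1) * volume S := by
        rw [← MeasureTheory.lintegral_eq_lmarginal_univ x0, ← volume_pi,
          lintegral_indicator_one hS]

end Solyanik

namespace Solyanik

def cube (a : Fin n → ℝ) (h : ℝ) : Set (Fin n → ℝ) :=
  Set.univ.pi fun i => Set.Ioo (a i) (a i + h)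

lemma cube_measurable (a : Fin n → ℝ) (h : ℝ) : MeasurableSet (cube a h) :=
  MeasurableSet.univ_pi fun i => measurableSet_Ioo

lemma cube_volume (a : Fin n → ℝ) {h : ℝ} (hh : 0 < h) :
    volume (cube a h) = ENNReal.ofReal (h ^ n) := by
  rw [cube, volume_pi_pi]
  simp only [Real.volume_Ioo, add_sub_cancel_left]
  rw [Finset.prod_const, ← ENNReal.ofReal_pow hh.le, Finset.card_univ, Fintype.card_fin]

def coordsBelow (n : ℕ) (k : ℕ) : Finset (Fin n) :=
  Finset.univ.filter (fun i => (i : ℕ) < k)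

lemma coordsBelow_zero : coordsBelow n 0 = ∅ := by
  ext i; simp [coordsBelow]

lemma coordsBelow_univ : coordsBelow n n = Finset.univ := by
  ext i; simp [coordsBelow, i.isLt]

lemma coordsBelow_succ {k : ℕ} (hk : k < n) :
    coordsBelow n (k + 1) = insert ⟨k, hk⟩ (coordsBelow n k) := by
  ext i
  simp only [coordsBelow, Finset.mem_filter, Finset.mem_univ, true_and, Finset.mem_insert]
  constructor
  · intro hik
    rcases Nat.lt_succ_iff_lt_or_eq.mp hik with h | h
    · exact Or.inr h
    · exact Or.inl (Fin.ext h)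
  · rintro (rfl | h)
    · exact Nat.lt_succ_self k
    · exact h.trans (Nat.lt_succ_self k)

lemma not_mem_coordsBelow {k : ℕ} (hk : k < n) : (⟨k, hk⟩ : Fin n) ∉ coordsBelow n k := by
  simp [coordsBelow]

lemma coordsBelow_card : ∀ k, k ≤ n → (coordsBelow n k).card = k := by
  intro k
  induction k with
  | zero => intro _; simp [coordsBelow_zero]
  | succ k ih =>
    intro hk
    rw [coordsBelow_succ (Nat.lt_of_succ_le hk),
      Finset.card_insert_of_notMem (not_mem_coordsBelow _), ih (Nat.le_of_succ_le hk)]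

lemma lmarginal_indicator_bound {E : Set (Fin n → ℝ)} (hE : MeasurableSet E)
    (a : Fin n → ℝ) {h : ℝ} (hh : 0 < h) (s : Finset (Fin n)) :
    ∀ j ∉ s, ∀ w : Fin n → ℝ,
      (∫⋯∫⁻_s, ((cube a h ∩ E).indicator 1) ∂(fun _ => volume)) w
        ≤ ENNReal.ofReal (h ^ s.card)
            * (Set.Ioo (a j) (a j + h)).indicator 1 (w j) := by
  have hQE : Measurable ((cube a h ∩ E).indicator (1 : (Fin n → ℝ) → ℝ≥0∞)) :=
    measurable_one.indicator ((cube_measurable a h).inter hE)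
  induction s using Finset.induction with
  | empty =>
    intro j _ w
    rw [MeasureTheory.lmarginal_empty]
    by_cases hw : w ∈ cube a h ∩ E
    · rw [Set.indicator_of_mem hw, Set.indicator_of_mem (hw.1 j (Set.mem_univ j))]
      simp
    · rw [Set.indicator_of_notMem hw]
      exact zero_le
  | @insert i s hi ih =>
    intro j hj w
    have hji : j ≠ i := fun hrf => hj (hrf ▸ Finset.mem_insert_self i s)
    have hjs : j ∉ s := fun hmem => hj (Finset.mem_insert_of_mem hmem)
    rw [MeasureTheory.lmarginal_insert _ hQE hi]
    by_cases hwj : w j ∈ Set.Ioo (a j) (a j + h)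
    · rw [Set.indicator_of_mem hwj, Pi.one_apply, mul_one]
      calc ∫⁻ t, (∫⋯∫⁻_s, ((cube a h ∩ E).indicator 1) ∂(fun _ => volume))
            (Function.update w i t)
          ≤ ∫⁻ t, ENNReal.ofReal (h ^ s.card)
              * (Set.Ioo (a i) (a i + h)).indicator 1 t := by
            refine lintegral_mono fun t => ?_
            have h2 := ih i hi (Function.update w i t)
            rwa [Function.update_self] at h2
        _ = ENNReal.ofReal (h ^ s.card) * ENNReal.ofReal h := by
            rw [MeasureTheory.lintegral_const_mul _
                (measurable_one.indicator measurableSet_Ioo),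
              MeasureTheory.lintegral_indicator_one measurableSet_Ioo, Real.volume_Ioo,
              add_sub_cancel_left]
        _ = ENNReal.ofReal (h ^ (insert i s).card) := by
            rw [← ENNReal.ofReal_mul (pow_nonneg hh.le _),
              Finset.card_insert_of_notMem hi, pow_succ]
    · rw [Set.indicator_of_notMem hwj, mul_zero]
      have hzero : ∀ t : ℝ, (∫⋯∫⁻_s, ((cube a h ∩ E).indicator 1) ∂(fun _ => volume))
          (Function.update w i t) = 0 := by
        intro t
        refine le_antisymm ?_ zero_le
        have h2 := ih j hjs (Function.update w i t)
        rwa [Function.update_of_ne hji, Set.indicator_of_notMem hwj, mul_zero] at h2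
      simp [hzero]

/-- the chain of sweeps -/
def chain (E : Set (Fin n → ℝ)) (θ : ℝ) : ℕ → Set (Fin n → ℝ)
  | 0 => E
  | (k+1) => if hk : k < n then sweep (chain E θ k) ⟨k, hk⟩ θ else chain E θ k

lemma chain_measurable {E : Set (Fin n → ℝ)} (hE : MeasurableSet E) {θ : ℝ}
    (hθ0 : 0 < θ) : ∀ k, MeasurableSet (chain E θ k)
  | 0 => hE
  | (k+1) => by
    rw [chain]
    split
    · exact sweep_measurable (chain_measurable hE hθ0 k) _ hθ0
    · exact chain_measurable hE hθ0 k

lemma chain_volume {E : Set (Fin n → ℝ)} (hE : MeasurableSet E) {θ : ℝ}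
    (hθ0 : 0 < θ) (hθ1 : θ ≤ 1) : ∀ k,
    volume (chain E θ k) ≤ ENNReal.ofReal (2/θ - 1) ^ k * volume E
  | 0 => by simp [chain]
  | (k+1) => by
    rw [chain]
    split
    · refine le_trans (sweep_volume (chain_measurable hE hθ0 k) _ hθ0 hθ1) ?_
      rw [pow_succ, mul_comm (_ ^ k) _, mul_assoc]
      exact mul_le_mul_right (chain_volume hE hθ0 hθ1 k) _
    · refine le_trans (chain_volume hE hθ0 hθ1 k) ?_
      have h1θ : 1 ≤ 1/θ := by rw [le_div_iff₀ hθ0]; linarith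
      have h2θ : (2:ℝ)/θ = 2*(1/θ) := by ring
      have h1c : (1:ℝ≥0∞) ≤ ENNReal.ofReal (2/θ - 1) := by
        rw [← ENNReal.ofReal_one]
        exact ENNReal.ofReal_le_ofReal (by linarith)
      exact mul_le_mul_left (pow_le_pow_right₀ h1c (Nat.le_succ k)) _

end Solyanik

namespace Solyanik

lemma capture {E : Set (Fin n → ℝ)} (hE : MeasurableSet E)
    {d : ℝ} (hd0 : 0 < d) (hd1 : d < 1)
    (a : Fin n → ℝ) {h : ℝ} (hh : 0 < h) :
    ∀ k, k ≤ n → ∀ z ∈ cube a h,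
      ENNReal.ofReal ((1 - d ^ k) * h ^ k)
        < (∫⋯∫⁻_(coordsBelow n k), ((cube a h ∩ E).indicator 1) ∂(fun _ => volume)) z →
      z ∈ chain E (1 - d) k := by
  have hQE : Measurable ((cube a h ∩ E).indicator (1 : (Fin n → ℝ) → ℝ≥0∞)) :=
    measurable_one.indicator ((cube_measurable a h).inter hE)
  intro k
  induction k with
  | zero =>
    intro _ z hz hlt
    rw [coordsBelow_zero, MeasureTheory.lmarginal_empty] at hlt
    simp only [pow_zero, sub_self, zero_mul, ENNReal.ofReal_zero] at hlt
    by_contra hzE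
    rw [Set.indicator_of_notMem (fun hmem => hzE hmem.2)] at hlt
    exact lt_irrefl _ hlt
  | succ k ih =>
    intro hk1 z hz hlt
    have hk : k < n := Nat.lt_of_succ_le hk1
    rw [coordsBelow_succ hk,
      MeasureTheory.lmarginal_insert _ hQE (not_mem_coordsBelow hk)] at hlt
    set κ : Fin n := ⟨k, hk⟩ with hκ
    set g : ℝ → ℝ≥0∞ := fun t =>
      (∫⋯∫⁻_(coordsBelow n k), ((cube a h ∩ E).indicator 1) ∂(fun _ => volume))
        (Function.update z κ t) with hg
    have hgmeas : Measurable g := (hQE.lmarginal _).comp (measurable_update z)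
    have hgbound : ∀ t, g t ≤ ENNReal.ofReal (h ^ k)
        * (Set.Ioo (a κ) (a κ + h)).indicator 1 t := by
      intro t
      have h2 := lmarginal_indicator_bound hE a hh (coordsBelow n k) κ
        (not_mem_coordsBelow hk) (Function.update z κ t)
      rwa [Function.update_self, coordsBelow_card k hk.le] at h2
    have hgA : ∀ t, g t ≤ ENNReal.ofReal (h ^ k) := by
      intro t
      refine (hgbound t).trans ?_
      nth_rewrite 2 [← mul_one (ENNReal.ofReal (h ^ k))]
      refine mul_le_mul_right ?_ _
      exact Set.indicator_apply_le' (fun _ => le_rfl) (fun _ => zero_le)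
    set J := Set.Ioo (a κ) (a κ + h) with hJdef
    set B := {t : ℝ | ENNReal.ofReal ((1 - d ^ k) * h ^ k) < g t} with hBdef
    have hBmeas : MeasurableSet B := measurableSet_lt measurable_const hgmeas
    have hvolJ : volume J = ENNReal.ofReal h := by
      rw [hJdef, Real.volume_Ioo, add_sub_cancel_left]
    have hdk0 : (0:ℝ) ≤ d ^ k := pow_nonneg hd0.le k
    have hdk1 : d ^ k ≤ 1 := pow_le_one₀ hd0.le hd1.le
    have hmain : ENNReal.ofReal ((1 - d) * h) < volume (J ∩ B) := by
      by_contra hcon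
      push_neg at hcon
      have hJmeas : MeasurableSet J := measurableSet_Ioo
      have hlt' : ENNReal.ofReal ((1 - d ^ (k+1)) * h ^ (k+1)) < ∫⁻ t, g t := hlt
      have hcompl : ∫⁻ t in Jᶜ, g t = 0 := by
        have hz0 : ∀ t ∈ Jᶜ, g t = 0 := by
          intro t ht
          refine le_antisymm ?_ zero_le
          have h3 := hgbound t
          rwa [Set.indicator_of_notMem ht, mul_zero] at h3
        calc ∫⁻ t in Jᶜ, g t = ∫⁻ t in Jᶜ, 0 := by
              refine MeasureTheory.setLIntegral_congr_fun hJmeas.compl ?_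
              exact hz0
          _ = 0 := MeasureTheory.lintegral_zero
      have hJfull : (∫⁻ t, g t) = ∫⁻ t in J, g t := by
        conv_lhs => rw [← MeasureTheory.lintegral_add_compl g hJmeas (μ := volume)]
        rw [hcompl, add_zero]
      have hsplit : ∫⁻ t in J, g t ≤ (∫⁻ t in J ∩ B, g t) + ∫⁻ t in J \ B, g t :=
        le_of_eq (MeasureTheory.lintegral_inter_add_diff g J hBmeas).symm
      have hIB : ∫⁻ t in J ∩ B, g t ≤ ENNReal.ofReal (h ^ k) * volume (J ∩ B) := by
        refine le_trans (lintegral_mono fun t => hgA t) ?_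
        rw [MeasureTheory.setLIntegral_const]
      have hID : ∫⁻ t in J \ B, g t
          ≤ ENNReal.ofReal ((1 - d ^ k) * h ^ k) * volume (J \ B) := by
        refine le_trans (MeasureTheory.setLIntegral_mono measurable_const ?_)
          (le_of_eq (MeasureTheory.setLIntegral_const _ _))
        intro t ht
        exact le_of_not_gt ht.2
      have hm1fin : volume (J ∩ B) ≠ ⊤ :=
        ne_top_of_le_ne_top (by rw [hvolJ]; exact ENNReal.ofReal_ne_top)
          (measure_mono Set.inter_subset_left)
      have hm2fin : volume (J \ B) ≠ ⊤ :=
        ne_top_of_le_ne_top (by rw [hvolJ]; exact ENNReal.ofReal_ne_top)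
          (measure_mono Set.diff_subset)
      set r1 := (volume (J ∩ B)).toReal with hr1
      set r2 := (volume (J \ B)).toReal with hr2
      have hr1nn : 0 ≤ r1 := ENNReal.toReal_nonneg
      have hr2nn : 0 ≤ r2 := ENNReal.toReal_nonneg
      have hsum : r1 + r2 = h := by
        rw [hr1, hr2, ← ENNReal.toReal_add hm1fin hm2fin,
          MeasureTheory.measure_inter_add_diff J hBmeas, hvolJ,
          ENNReal.toReal_ofReal hh.le]
      have hr1le : r1 ≤ (1 - d) * h := by
        rw [hr1]
        calc (volume (J ∩ B)).toReal ≤ (ENNReal.ofReal ((1-d)*h)).toReal :=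
              ENNReal.toReal_mono ENNReal.ofReal_ne_top hcon
          _ = (1-d)*h := ENNReal.toReal_ofReal (by nlinarith)
      have e1 : ENNReal.ofReal (h ^ k) * volume (J ∩ B) = ENNReal.ofReal (h ^ k * r1) := by
        conv_lhs => rw [← ENNReal.ofReal_toReal hm1fin]
        rw [← ENNReal.ofReal_mul (pow_nonneg hh.le k), hr1]
      have e2 : ENNReal.ofReal ((1 - d ^ k) * h ^ k) * volume (J \ B)
          = ENNReal.ofReal ((1 - d ^ k) * h ^ k * r2) := by
        conv_lhs => rw [← ENNReal.ofReal_toReal hm2fin]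
        rw [← ENNReal.ofReal_mul (mul_nonneg (by linarith) (pow_nonneg hh.le k)), hr2]
      have hchain : ∫⁻ t, g t ≤ ENNReal.ofReal (h ^ k * r1 + (1 - d ^ k) * h ^ k * r2) := by
        rw [hJfull]
        refine le_trans hsplit ?_
        rw [ENNReal.ofReal_add (mul_nonneg (pow_nonneg hh.le k) hr1nn)
          (mul_nonneg (mul_nonneg (by linarith) (pow_nonneg hh.le k)) hr2nn), ← e1, ← e2]
        exact add_le_add hIB hID
      have hreal : (1 - d ^ (k+1)) * h ^ (k+1) < h ^ k * r1 + (1 - d ^ k) * h ^ k * r2 := by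
        have h4 := hlt'.trans_le hchain
        rw [ENNReal.ofReal_lt_ofReal_iff_of_nonneg
          (mul_nonneg (by nlinarith [pow_le_one₀ hd0.le hd1.le (n := k+1)]) (pow_nonneg hh.le (k+1)))] at h4
        exact h4
      have hr2eq : r2 = h - r1 := by linarith
      have hineq : h ^ k * r1 + (1 - d ^ k) * h ^ k * r2 ≤ (1 - d ^ (k+1)) * h ^ (k+1) := by
        rw [hr2eq]
        have hint := mul_le_mul_of_nonneg_left hr1le
          (mul_nonneg hdk0 (pow_nonneg hh.le k))
        rw [pow_succ, pow_succ]
        nlinarith [hint]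
      linarith
    -- conclude membership in the sweep
    have hmem : ∀ t ∈ J ∩ B, Function.update z κ t ∈ chain E (1-d) k := by
      intro t ht
      refine ih hk.le _ ?_ ?_
      · intro i _
        by_cases hiκ : i = κ
        · subst hiκ; rw [Function.update_self]; exact ht.1
        · rw [Function.update_of_ne hiκ]; exact hz i (Set.mem_univ i)
      · exact ht.2
    show z ∈ chain E (1-d) (k+1)
    rw [chain, dif_pos hk]
    refine ⟨a κ, a κ + h, (hz κ (Set.mem_univ κ)).1, (hz κ (Set.mem_univ κ)).2, ?_⟩
    show ENNReal.ofReal ((1-d) * ((a κ + h) - a κ)) < volume (fiber (chain E (1-d) k) κ z ∩ Set.Ioo (a κ) (a κ + h))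
    have harg : (1-d) * ((a κ + h) - a κ) = (1-d) * h := by ring
    rw [harg]
    refine lt_of_lt_of_le hmain (measure_mono ?_)
    intro t ht
    exact ⟨hmem t ht, ht.1⟩

end Solyanik

namespace Solyanik

lemma openCube_eq_cube {n : ℕ} (a : Fin n → ℝ) (h : ℝ) : openCube a h = cube a h := rfl

lemma setLintegral_indicator_one' {n : ℕ} {E : Set (Fin n → ℝ)} (hE : MeasurableSet E)
    (Q : Set (Fin n → ℝ)) (hQ : MeasurableSet Q) :
    (∫⁻ y in Q, E.indicator 1 y) = volume (E ∩ Q) := by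
  rw [MeasureTheory.lintegral_indicator_one hE, MeasureTheory.Measure.restrict_apply hE]

lemma upper_single {n : ℕ} (hn : 1 ≤ n) {E : Set (Fin n → ℝ)} (hE : MeasurableSet E)
    {d : ℝ} (hd0 : 0 < d) (hd1 : d < 1) :
    volume {x : Fin n → ℝ | MHLc n (E.indicator 1) x > ENNReal.ofReal (1 - d ^ n)}
      ≤ ENNReal.ofReal (2/(1-d) - 1) ^ n * volume E := by
  have hθ0 : 0 < 1 - d := by linarith
  have hθ1 : 1 - d ≤ 1 := by linarith
  have hsub : {x : Fin n → ℝ | MHLc n (E.indicator 1) x > ENNReal.ofReal (1 - d ^ n)}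
      ⊆ chain E (1 - d) n := by
    intro x hx
    simp only [Set.mem_setOf_eq, gt_iff_lt, MHLc, lt_iSup_iff] at hx
    obtain ⟨a, h, hh, hxc, hratio⟩ := hx
    have hQvol : volume (openCube a h) = ENNReal.ofReal (h ^ n) := by
      rw [openCube_eq_cube, cube_volume a hh]
    have hlt : ENNReal.ofReal ((1 - d ^ n) * h ^ n) < volume (cube a h ∩ E) := by
      have h1 : ENNReal.ofReal (1 - d ^ n) * volume (openCube a h)
          < ∫⁻ y in openCube a h, E.indicator 1 y := by
        rw [ENNReal.lt_div_iff_mul_lt ?h1 ?h2] at hratio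
        · exact hratio
        case h1 =>
          left
          rw [hQvol]
          simp only [ne_eq, ENNReal.ofReal_eq_zero, not_le]
          positivity
        case h2 => left; rw [hQvol]; exact ENNReal.ofReal_ne_top
      rw [setLintegral_indicator_one' hE (openCube a h) (cube_measurable a h)] at h1
      rw [hQvol, ← ENNReal.ofReal_mul (by nlinarith [pow_le_one₀ hd0.le hd1.le (n := n)])] at h1
      rw [Set.inter_comm]
      exact h1
    have hF : (∫⋯∫⁻_(coordsBelow n n), ((cube a h ∩ E).indicator 1)
        ∂(fun _ => volume)) x = volume (cube a h ∩ E) := by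
      rw [coordsBelow_univ, MeasureTheory.lmarginal_univ, ← volume_pi,
        MeasureTheory.lintegral_indicator_one ((cube_measurable a h).inter hE)]
    exact capture hE hd0 hd1 a hh n le_rfl x hxc (by rw [hF]; exact hlt)
  calc volume {x : Fin n → ℝ | MHLc n (E.indicator 1) x > ENNReal.ofReal (1 - d ^ n)}
      ≤ volume (chain E (1-d) n) := measure_mono hsub
    _ ≤ ENNReal.ofReal (2/(1-d) - 1) ^ n * volume E := chain_volume hE hθ0 hθ1 n

lemma CHLc_upper {n : ℕ} (hn : 1 ≤ n) {α : ℝ} (hα0 : 0 < α) (hα1 : α < 1) :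
    CHLc n α ≤ ENNReal.ofReal (2/(1 - (1-α) ^ ((n:ℝ)⁻¹)) - 1) ^ n := by
  set d : ℝ := (1-α) ^ ((n:ℝ)⁻¹) with hd
  have hn0 : (n:ℝ) ≠ 0 := Nat.cast_ne_zero.mpr (by omega)
  have h1α : 0 < 1 - α := by linarith
  have hd0 : 0 < d := Real.rpow_pos_of_pos h1α _
  have hd1 : d < 1 := by
    rw [hd]
    exact Real.rpow_lt_one h1α.le (by linarith) (by positivity)
  have hdn : d ^ n = 1 - α := by
    rw [hd, ← Real.rpow_natCast ((1-α) ^ ((n:ℝ)⁻¹)) n, ← Real.rpow_mul h1α.le,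
      inv_mul_cancel₀ hn0, Real.rpow_one]
  have hα : α = 1 - d ^ n := by rw [hdn]; ring
  rw [CHLc]
  refine iSup_le fun E => iSup_le fun hE => iSup_le fun hEpos => iSup_le fun hEfin => ?_
  rw [ENNReal.div_le_iff hEpos.ne' hEfin.ne]
  rw [hα]
  exact upper_single hn hE hd0 hd1

end Solyanik

namespace Solyanik

section Lower

variable {N K : ℕ} {τ ε : ℝ}

/-- sum of indices, as a real number -/
def msum (m : Fin N → Fin K) : ℝ := ∑ j, ((m j : ℕ) : ℝ)

lemma msum_nonneg (m : Fin N → Fin K) : 0 ≤ msum m :=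
  Finset.sum_nonneg fun j _ => by positivity

lemma msum_le (m : Fin N → Fin K) (hK : 1 ≤ K) : msum m ≤ N * (K - 1) := by
  calc msum m ≤ ∑ _j : Fin N, ((K:ℝ) - 1) := by
        refine Finset.sum_le_sum fun j _ => ?_
        have : (m j : ℕ) ≤ K - 1 := Nat.le_pred_of_lt (m j).isLt
        have h2 : ((m j : ℕ) : ℝ) ≤ ((K - 1 : ℕ) : ℝ) := Nat.cast_le.mpr this
        rwa [Nat.cast_sub hK, Nat.cast_one] at h2
    _ = N * ((K:ℝ) - 1) := by rw [Finset.sum_const, Finset.card_univ, Fintype.card_fin,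
        nsmul_eq_mul]

/-- lower corner of the `m`-th staircase cube -/
noncomputable def pos (τ : ℝ) (m : Fin N → Fin K) : Fin (N+1) → ℝ :=
  Fin.snoc (fun j => ((m j : ℕ) + 1 : ℝ) * τ) (-((msum m + N) * τ))

lemma pos_sum (τ : ℝ) (m : Fin N → Fin K) : ∑ i, pos τ m i = 0 := by
  rw [Fin.sum_univ_castSucc]
  simp only [pos, Fin.snoc_castSucc, Fin.snoc_last]
  have : ∑ j : Fin N, ((m j : ℕ) + 1 : ℝ) * τ = (msum m + N) * τ := by
    rw [Finset.sum_congr rfl (fun j _ => add_mul ((m j : ℕ) : ℝ) 1 τ), Finset.sum_add_distrib]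
    rw [← Finset.sum_mul, one_mul, Finset.sum_const, Finset.card_univ, Fintype.card_fin,
      nsmul_eq_mul, msum, add_mul]
  rw [this]
  ring

/-- the gain box sitting at the leading corner of the `m`-th cube -/
noncomputable def gainBox (τ ε : ℝ) (m : Fin N → Fin K) : Set (Fin (N+1) → ℝ) :=
  Set.univ.pi (Fin.snoc
    (fun j => Set.Ioo (1 + ((m j : ℕ) : ℝ) * τ) (1 + ((m j : ℕ) : ℝ) * τ + τ))
    (Set.Ioo (1 - ε - τ * msum m) (1 - ε - τ * msum m + ε/2)))

lemma gainBox_measurable (m : Fin N → Fin K) : MeasurableSet (gainBox τ ε m) :=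
  MeasurableSet.univ_pi fun i => by
    cases i using Fin.lastCases with
    | last => simp only [Fin.snoc_last]; exact measurableSet_Ioo
    | cast j => simp only [Fin.snoc_castSucc]; exact measurableSet_Ioo

lemma gainBox_volume (hτ : 0 < τ) (hε : 0 < ε) (m : Fin N → Fin K) :
    volume (gainBox τ ε m) = ENNReal.ofReal (τ ^ N * (ε/2)) := by
  rw [gainBox, volume_pi_pi, Fin.prod_univ_castSucc]
  simp only [Fin.snoc_castSucc, Fin.snoc_last, Real.volume_Ioo]
  rw [Finset.prod_congr rfl (fun j _ => by rw [show 1 + ((m j : ℕ) : ℝ) * τ + τ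
      - (1 + ((m j : ℕ) : ℝ) * τ) = τ by ring])]
  rw [Finset.prod_const, Finset.card_univ, Fintype.card_fin,
    show 1 - ε - τ * msum m + ε/2 - (1 - ε - τ * msum m) = ε/2 by ring,
    ← ENNReal.ofReal_pow hτ.le, ← ENNReal.ofReal_mul (by positivity)]

lemma gainBox_subset_cube (hτ0 : 0 < τ) (hτ1 : τ ≤ 1) (hε1 : ε ≤ 1)
    (hNτ : (N:ℝ) * τ ≤ ε/2) (m : Fin N → Fin K) :
    gainBox τ ε m ⊆ cube (pos τ m) 1 := by
  intro x hx
  intro i _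
  have hxi := hx i (Set.mem_univ i)
  cases i using Fin.lastCases with
  | last =>
    simp only [Fin.snoc_last, pos] at hxi ⊢
    constructor
    · have := hxi.1
      nlinarith [msum_nonneg m]
    · have := hxi.2
      nlinarith [msum_nonneg m]
  | cast j =>
    simp only [Fin.snoc_castSucc, pos] at hxi ⊢
    constructor
    · have := hxi.1
      nlinarith
    · have := hxi.2
      nlinarith

lemma gainBox_sum (hτ0 : 0 < τ) (m : Fin N → Fin K) {x : Fin (N+1) → ℝ}
    (hx : x ∈ gainBox τ ε m) : (N + 1 : ℝ) - ε < ∑ i, x i := by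
  have hlow : ∀ j : Fin N, 1 + ((m j : ℕ) : ℝ) * τ < x (Fin.castSucc j) := by
    intro j
    have h := hx (Fin.castSucc j) (Set.mem_univ _)
    simp only [Fin.snoc_castSucc] at h
    exact h.1
  have hlast : 1 - ε - τ * msum m < x (Fin.last N) := by
    have h := hx (Fin.last N) (Set.mem_univ _)
    simp only [Fin.snoc_last] at h
    exact h.1
  have hsum : ∑ j : Fin N, (1 + ((m j : ℕ) : ℝ) * τ) < ∑ j : Fin N, x (Fin.castSucc j) ∨
      (N = 0 ∧ (0:ℝ) = 0) := by
    rcases Nat.eq_zero_or_pos N with h | h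
    · exact Or.inr ⟨h, rfl⟩
    · exact Or.inl (Finset.sum_lt_sum_of_nonempty
        (Finset.univ_nonempty_iff.mpr ⟨⟨0, h⟩⟩) (fun j _ => hlow j))
  have hsum' : ∑ j : Fin N, (1 + ((m j : ℕ) : ℝ) * τ) ≤ ∑ j : Fin N, x (Fin.castSucc j) :=
    Finset.sum_le_sum (fun j _ => (hlow j).le)
  have hexp : ∑ j : Fin N, (1 + ((m j : ℕ) : ℝ) * τ) = N + τ * msum m := by
    rw [Finset.sum_add_distrib, Finset.sum_const, Finset.card_univ, Fintype.card_fin,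
      nsmul_eq_mul, mul_one, msum, Finset.mul_sum, ← Finset.sum_mul]
    ring_nf
    congr 1
    rw [Finset.sum_mul]
    exact Finset.sum_congr rfl fun j _ => by ring
  rw [Fin.sum_univ_castSucc]
  nlinarith [hsum', hlast]

lemma gainBox_disjoint (hτ0 : 0 < τ) {m m' : Fin N → Fin K} (hmm : m ≠ m') :
    Disjoint (gainBox τ ε m) (gainBox τ ε m') := by
  obtain ⟨j, hj⟩ : ∃ j, m j ≠ m' j := by
    by_contra hcc
    push_neg at hcc
    exact hmm (funext hcc)
  rw [Set.disjoint_left]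
  intro x hx hx'
  have h1 := hx (Fin.castSucc j) (Set.mem_univ _)
  have h2 := hx' (Fin.castSucc j) (Set.mem_univ _)
  simp only [gainBox, Fin.snoc_castSucc] at h1 h2
  have hj' : ((m j : ℕ) : ℝ) ≠ ((m' j : ℕ) : ℝ) := by
    simp only [ne_eq, Nat.cast_inj]
    exact fun hc => hj (Fin.val_injective hc)
  rcases lt_or_gt_of_ne hj' with h | h
  · have hstep : ((m j : ℕ) : ℝ) + 1 ≤ ((m' j : ℕ) : ℝ) := by
      have : (m j : ℕ) < (m' j : ℕ) := by exact_mod_cast h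
      exact_mod_cast this
    nlinarith [h1.2, h2.1]
  · have hstep : ((m' j : ℕ) : ℝ) + 1 ≤ ((m j : ℕ) : ℝ) := by
      have : (m' j : ℕ) < (m j : ℕ) := by exact_mod_cast h
      exact_mod_cast this
    nlinarith [h1.1, h2.2]

end Lower

end Solyanik

namespace Solyanik

lemma corner_lemma {n : ℕ} {p : Fin n → ℝ} (hp : ∑ i, p i = 0) {ε : ℝ}
    {x : Fin n → ℝ} (hx : x ∈ cube p 1) (hσ : (n:ℝ) - ε ≤ ∑ i, x i) :
    ∀ i, x i ∈ Set.Icc (p i + 1 - ε) (p i + 1) := by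
  intro i
  have hxi := hx i (Set.mem_univ i)
  refine ⟨?_, hxi.2.le⟩
  have hsum1 : ∑ j ∈ Finset.univ.erase i, x j ≤ ∑ j ∈ Finset.univ.erase i, (p j + 1) :=
    Finset.sum_le_sum fun j _ => (hx j (Set.mem_univ j)).2.le
  have he1 : ∑ j ∈ Finset.univ.erase i, x j = (∑ j, x j) - x i :=
    Finset.sum_erase_eq_sub (Finset.mem_univ i)
  have he2 : ∑ j ∈ Finset.univ.erase i, (p j + 1) = (∑ j, (p j + 1)) - (p i + 1) :=
    Finset.sum_erase_eq_sub (Finset.mem_univ i)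
  have he3 : ∑ j : Fin n, (p j + 1) = (n : ℝ) := by
    rw [Finset.sum_add_distrib, hp, Finset.sum_const, Finset.card_univ, Fintype.card_fin,
      nsmul_eq_mul, mul_one, zero_add]
  rw [he1] at hsum1
  rw [he2, he3] at hsum1
  linarith

lemma cube_subset_bigBox {N K : ℕ} {τ : ℝ} (hτ0 : 0 < τ) (hKτ : (K:ℝ) * τ ≤ 1)
    (m : Fin N → Fin K) :
    cube (pos τ m) 1 ⊆ cube (fun _ => -((N:ℝ)+1)) ((N:ℝ)+3) := by
  have h1 : msum m + (N:ℝ) ≤ (N:ℝ) * (K:ℝ) := by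
    have he : msum m + (N:ℝ) = ∑ j : Fin N, (((m j : ℕ) : ℝ) + 1) := by
      rw [Finset.sum_add_distrib]
      simp [msum, Finset.card_univ, nsmul_eq_mul]
    rw [he]
    calc ∑ j : Fin N, (((m j : ℕ):ℝ) + 1) ≤ ∑ _j : Fin N, (K:ℝ) :=
        Finset.sum_le_sum fun j _ => by exact_mod_cast Nat.succ_le_of_lt (m j).isLt
      _ = (N:ℝ) * (K:ℝ) := by
        rw [Finset.sum_const, Finset.card_univ, Fintype.card_fin, nsmul_eq_mul]
  have hSm := msum_nonneg (K := K) m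
  have hNK : (msum m + (N:ℝ)) * τ ≤ (N:ℝ) := by
    calc (msum m + (N:ℝ)) * τ ≤ ((N:ℝ) * (K:ℝ)) * τ :=
        mul_le_mul_of_nonneg_right h1 hτ0.le
      _ = (N:ℝ) * ((K:ℝ) * τ) := by ring
      _ ≤ (N:ℝ) * 1 := mul_le_mul_of_nonneg_left hKτ (Nat.cast_nonneg N)
      _ = (N:ℝ) := mul_one _
  intro x hx i _
  have hxi := hx i (Set.mem_univ i)
  dsimp only
  cases i using Fin.lastCases with
  | last =>
    simp only [pos, Fin.snoc_last] at hxi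
    constructor
    · have := hxi.1
      nlinarith
    · have := hxi.2
      nlinarith [mul_nonneg (by linarith : (0:ℝ) ≤ msum m + N) hτ0.le]
  | cast j =>
    simp only [pos, Fin.snoc_castSucc] at hxi
    have hjK : ((m j : ℕ) : ℝ) + 1 ≤ (K:ℝ) := by
      exact_mod_cast Nat.succ_le_of_lt (m j).isLt
    have hposj : 0 < (((m j : ℕ) : ℝ) + 1) * τ := by positivity
    have hposj2 : (((m j : ℕ) : ℝ) + 1) * τ ≤ 1 :=
      le_trans (mul_le_mul_of_nonneg_right hjK hτ0.le) hKτ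
    constructor
    · have := hxi.1
      nlinarith
    · have := hxi.2
      nlinarith

end Solyanik

namespace Solyanik

lemma CHLc_lower {n : ℕ} (hn : 1 ≤ n) {α : ℝ} (hα0 : 1/2 ≤ α) (hα1 : α < 1) :
    1 + ENNReal.ofReal (((1-α)/2) ^ ((n:ℝ)⁻¹) / (2^n * ((n:ℝ)+2)^n)) ≤ CHLc n α := by
  obtain ⟨N, rfl⟩ : ∃ N, n = N + 1 := ⟨n - 1, by omega⟩
  have hn0 : ((N+1 : ℕ):ℝ) ≠ 0 := by positivity
  have h1α0 : (0:ℝ) < (1-α)/2 := by linarith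
  have h1α1 : (1-α)/2 < 1 := by linarith
  set ε : ℝ := ((1-α)/2) ^ (((N+1 : ℕ):ℝ))⁻¹ with hεdef
  have hε0 : 0 < ε := Real.rpow_pos_of_pos h1α0 _
  have hε1 : ε ≤ 1 := Real.rpow_le_one h1α0.le h1α1.le (by positivity)
  have hεn : ε ^ (N+1) = (1-α)/2 := by
    rw [hεdef, ← Real.rpow_natCast (((1-α)/2) ^ (((N+1 : ℕ):ℝ))⁻¹) (N+1),
      ← Real.rpow_mul h1α0.le, inv_mul_cancel₀ hn0, Real.rpow_one]
  set τ : ℝ := ε / (2*(N+1)) with hτdef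
  have hτ0 : 0 < τ := by
    rw [hτdef]; positivity
  have hτhalf : τ ≤ 1/2 := by
    rw [hτdef, div_le_div_iff₀ (by positivity) (by norm_num)]
    nlinarith [hε0.le, (Nat.cast_nonneg N : (0:ℝ) ≤ N)]
  have hτ1 : τ ≤ 1 := le_trans hτhalf (by norm_num)
  have hNτ : (N:ℝ) * τ ≤ ε/2 := by
    rw [hτdef, mul_div_assoc', div_le_div_iff₀ (by positivity) (by norm_num)]
    push_cast
    nlinarith [hε0.le, (Nat.cast_nonneg N : (0:ℝ) ≤ N)]
  set K : ℕ := ⌊1/τ⌋₊ with hKdef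
  have hK1 : 1 ≤ K := by
    rw [hKdef]
    refine Nat.le_floor ?_
    rw [Nat.cast_one, le_div_iff₀ hτ0]
    linarith
  have hKτ : (K:ℝ) * τ ≤ 1 := by
    have h2 := Nat.floor_le (le_of_lt (show (0:ℝ) < 1/τ by positivity))
    rw [← hKdef] at h2
    calc (K:ℝ) * τ ≤ (1/τ) * τ := mul_le_mul_of_nonneg_right h2 hτ0.le
      _ = 1 := by field_simp
  have hKτhalf : 1/2 ≤ (K:ℝ) * τ := by
    have h2 := Nat.lt_floor_add_one (1/τ)
    rw [← hKdef] at h2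
    have h3 : 1 < ((K:ℝ) + 1) * τ := by
      rw [← div_lt_iff₀ hτ0] at *
      linarith
    nlinarith
  set Hs : Set (Fin (N+1) → ℝ) := {x | ∑ i, x i < ((N+1 : ℕ):ℝ) - ε} with hHsdef
  set U : Set (Fin (N+1) → ℝ) := ⋃ m : Fin N → Fin K, cube (pos τ m) 1 with hUdef
  set E : Set (Fin (N+1) → ℝ) := U ∩ Hs with hEdef
  have hUmeas : MeasurableSet U := MeasurableSet.iUnion fun m => cube_measurable _ _
  have hsum_meas : Measurable fun x : Fin (N+1) → ℝ => ∑ i, x i :=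
    Finset.univ.measurable_sum fun i _ => measurable_pi_apply i
  have hHmeas : MeasurableSet Hs := measurableSet_lt hsum_meas measurable_const
  have hEmeas : MeasurableSet E := hUmeas.inter hHmeas
  have hQvol : ∀ m : Fin N → Fin K, volume (cube (pos τ m) 1) = 1 := by
    intro m
    rw [cube_volume _ one_pos, one_pow, ENNReal.ofReal_one]
  -- density of E in each cube
  have hQE : ∀ m : Fin N → Fin K, ENNReal.ofReal α < volume (E ∩ cube (pos τ m) 1) := by
    intro m
    have hQdiff : cube (pos τ m) 1 \ E ⊆
        Set.univ.pi fun i => Set.Icc (pos τ m i + 1 - ε) (pos τ m i + 1) := by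
      rintro x ⟨hxQ, hxE⟩
      have hxU : x ∈ U := Set.mem_iUnion.mpr ⟨m, hxQ⟩
      have hxH : x ∉ Hs := fun hxH => hxE ⟨hxU, hxH⟩
      have hσ : ((N+1:ℕ):ℝ) - ε ≤ ∑ i, x i := le_of_not_gt hxH
      intro i _
      exact corner_lemma (pos_sum τ m) hxQ hσ i
    have hRvol : volume (Set.univ.pi fun i =>
        Set.Icc (pos τ m i + 1 - ε) (pos τ m i + 1)) = ENNReal.ofReal (ε^(N+1)) := by
      rw [volume_pi_pi]
      have : ∀ i : Fin (N+1), volume (Set.Icc (pos τ m i + 1 - ε) (pos τ m i + 1))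
          = ENNReal.ofReal ε := by
        intro i
        rw [Real.volume_Icc]
        congr 1
        ring
      rw [Finset.prod_congr rfl (fun i _ => this i), Finset.prod_const, Finset.card_univ,
        Fintype.card_fin, ← ENNReal.ofReal_pow hε0.le]
    have hsplit : volume (cube (pos τ m) 1) ≤
        volume (cube (pos τ m) 1 ∩ E) + volume (cube (pos τ m) 1 \ E) := by
      conv_lhs => rw [← Set.inter_union_diff (cube (pos τ m) 1) E]
      exact measure_union_le _ _
    have h2 : (1:ℝ≥0∞) ≤ volume (cube (pos τ m) 1 ∩ E) + ENNReal.ofReal (ε^(N+1)) := by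
      rw [← hQvol m]
      exact hsplit.trans (add_le_add_right
        ((measure_mono hQdiff).trans (le_of_eq hRvol)) _)
    have h3 : ENNReal.ofReal (1 - ε^(N+1)) ≤ volume (cube (pos τ m) 1 ∩ E) := by
      have h4 : ENNReal.ofReal (1 - ε^(N+1)) + ENNReal.ofReal (ε^(N+1)) = 1 := by
        rw [← ENNReal.ofReal_add (by nlinarith [pow_le_one₀ hε0.le hε1 (n := N+1)])
          (by positivity : (0:ℝ) ≤ ε^(N+1))]
        norm_num
      have h5 : ENNReal.ofReal (1 - ε^(N+1)) + ENNReal.ofReal (ε^(N+1))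
          ≤ volume (cube (pos τ m) 1 ∩ E) + ENNReal.ofReal (ε^(N+1)) := by
        rw [h4]; exact h2
      exact (ENNReal.add_le_add_iff_right ENNReal.ofReal_ne_top).mp h5
    rw [Set.inter_comm]
    refine lt_of_lt_of_le ?_ h3
    rw [ENNReal.ofReal_lt_ofReal_iff (by nlinarith)]
    nlinarith [hεn]
  -- every staircase cube is inside the superlevel set
  set Gset : Set (Fin (N+1) → ℝ) :=
    {x | MHLc (N+1) (E.indicator 1) x > ENNReal.ofReal α} with hGdef
  have hcubeG : ∀ m : Fin N → Fin K, cube (pos τ m) 1 ⊆ Gset := by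
    intro m x hxQ
    show ENNReal.ofReal α < MHLc (N+1) (E.indicator 1) x
    have h1 : (∫⁻ y in openCube (pos τ m) 1, E.indicator 1 y)
        / volume (openCube (pos τ m) 1) = volume (E ∩ cube (pos τ m) 1) := by
      rw [setLintegral_indicator_one' hEmeas (openCube (pos τ m) 1) (cube_measurable _ _),
        show volume (openCube (pos τ m) 1) = volume (cube (pos τ m) 1) from rfl, hQvol m,
        div_one]
      rfl
    have hbody : volume (E ∩ cube (pos τ m) 1) ≤ MHLc (N+1) (E.indicator 1) x := by
      rw [← h1, MHLc]
      refine le_iSup_of_le (pos τ m) ?_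
      refine le_iSup_of_le (1:ℝ) ?_
      refine le_iSup_of_le one_pos ?_
      exact le_iSup_of_le hxQ le_rfl
    exact lt_of_lt_of_le (hQE m) hbody
  have hEG : E ⊆ Gset := fun x hx => by
    obtain ⟨m, hm⟩ := Set.mem_iUnion.mp hx.1
    exact hcubeG m hm
  have hDG : ∀ m : Fin N → Fin K, gainBox τ ε m ⊆ Gset := fun m =>
    (gainBox_subset_cube hτ0 hτ1 hε1 hNτ m).trans (hcubeG m)
  have hDE : ∀ m : Fin N → Fin K, Disjoint E (gainBox τ ε m) := by
    intro m
    rw [Set.disjoint_right]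
    intro x hx hxE
    have h2 := gainBox_sum hτ0 m hx
    have h3 : x ∈ Hs := hxE.2
    rw [hHsdef] at h3
    simp only [Set.mem_setOf_eq] at h3
    push_cast at h3
    linarith
  -- measure accounting
  have hvolD : volume (⋃ m : Fin N → Fin K, gainBox τ ε m)
      = (K^N : ℕ) * ENNReal.ofReal (τ^N * (ε/2)) := by
    rw [measure_iUnion (fun m m' hmm => gainBox_disjoint hτ0 hmm)
      (fun m => gainBox_measurable m), tsum_fintype]
    rw [Finset.sum_congr rfl (fun m _ => gainBox_volume hτ0 hε0 m), Finset.sum_const,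
      Finset.card_univ, Fintype.card_fun, Fintype.card_fin, Fintype.card_fin,
      nsmul_eq_mul]
  have hGlower : volume E + (K^N : ℕ) * ENNReal.ofReal (τ^N * (ε/2)) ≤ volume Gset := by
    rw [← hvolD,
      ← measure_union (Set.disjoint_iUnion_right.mpr fun m => hDE m)
        (MeasurableSet.iUnion fun m => gainBox_measurable m)]
    exact measure_mono (Set.union_subset hEG (Set.iUnion_subset hDG))
  -- bounds on the measure of E
  have hEbig : volume E ≤ ENNReal.ofReal ((((N+1):ℝ)+2)^(N+1)) := by
    have hsubbig : E ⊆ cube (fun _ => -((N:ℝ)+1)) ((N:ℝ)+3) :=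
      Set.inter_subset_left.trans
        (Set.iUnion_subset fun m => cube_subset_bigBox hτ0 hKτ m)
    refine (measure_mono hsubbig).trans ?_
    rw [cube_volume _ (by positivity : (0:ℝ) < (N:ℝ)+3)]
    apply ENNReal.ofReal_le_ofReal
    have hb : (N:ℝ)+3 = (((N+1):ℝ))+2 := by push_cast; ring
    rw [hb]
  have hEfin : volume E < ⊤ :=
    lt_of_le_of_lt hEbig ENNReal.ofReal_lt_top
  have hEpos : 0 < volume E := by
    have m0 : Fin N → Fin K := fun _ => ⟨0, by omega⟩
    calc (0:ℝ≥0∞) < ENNReal.ofReal α := by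
          rw [ENNReal.ofReal_pos]; linarith
      _ ≤ volume (E ∩ cube (pos τ m0) 1) := (hQE m0).le
      _ ≤ volume E := measure_mono Set.inter_subset_left
  -- the quotient bound
  have hgain : ENNReal.ofReal (ε / 2^(N+1))
      ≤ (K^N : ℕ) * ENNReal.ofReal (τ^N * (ε/2)) := by
    have hcast : ((K^N : ℕ) : ℝ≥0∞) = ENNReal.ofReal ((K:ℝ)^N) := by
      rw [← ENNReal.ofReal_natCast]
      congr 1
      push_cast
      ring
    rw [hcast, ← ENNReal.ofReal_mul (by positivity)]
    apply ENNReal.ofReal_le_ofReal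
    have h4 : (1/2:ℝ)^N ≤ ((K:ℝ)*τ)^N := pow_le_pow_left₀ (by norm_num) hKτhalf N
    calc ε / 2^(N+1) = (1/2:ℝ)^N * (ε/2) := by
          rw [div_pow, one_pow, pow_succ]
          ring
      _ ≤ ((K:ℝ)*τ)^N * (ε/2) := mul_le_mul_of_nonneg_right h4 (by positivity)
      _ = (K:ℝ)^N * (τ^N * (ε/2)) := by rw [mul_pow]; ring
  have hkey : 1 + ENNReal.ofReal ((ε / 2^(N+1)) / ((((N+1):ℝ)+2)^(N+1)))
      ≤ volume Gset / volume E := by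
    have hstep1 : ENNReal.ofReal ((ε / 2^(N+1)) / ((((N+1):ℝ)+2)^(N+1)))
        ≤ ((K^N : ℕ) * ENNReal.ofReal (τ^N * (ε/2))) / volume E := by
      rw [ENNReal.ofReal_div_of_pos (by positivity)]
      calc ENNReal.ofReal (ε / 2^(N+1)) / ENNReal.ofReal ((((N+1):ℝ)+2)^(N+1))
          ≤ ((K^N : ℕ) * ENNReal.ofReal (τ^N * (ε/2)))
              / ENNReal.ofReal ((((N+1):ℝ)+2)^(N+1)) :=
            ENNReal.div_le_div_right hgain _
        _ ≤ ((K^N : ℕ) * ENNReal.ofReal (τ^N * (ε/2))) / volume E :=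
            ENNReal.div_le_div_left hEbig _
    calc 1 + ENNReal.ofReal ((ε / 2^(N+1)) / ((((N+1):ℝ)+2)^(N+1)))
        ≤ 1 + ((K^N : ℕ) * ENNReal.ofReal (τ^N * (ε/2))) / volume E :=
          add_le_add_right hstep1 _
      _ = (volume E + (K^N : ℕ) * ENNReal.ofReal (τ^N * (ε/2))) / volume E := by
          rw [ENNReal.add_div, ENNReal.div_self hEpos.ne' hEfin.ne]
      _ ≤ volume Gset / volume E := ENNReal.div_le_div_right hGlower _
  refine le_trans ?_ (le_iSup_of_le E (le_iSup_of_le hEmeas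
    (le_iSup_of_le hEpos (le_iSup_of_le hEfin le_rfl))))
  refine le_trans ?_ hkey
  apply add_le_add_right
  apply ENNReal.ofReal_le_ofReal
  apply le_of_eq
  rw [div_div]
  congr 2
  push_cast
  ring

end Solyanik

namespace Solyanik

lemma pow_one_add_le (x : ℝ) (hx : 0 ≤ x) :
    ∀ n : ℕ, 2*n*x ≤ 1 → (1+x)^n ≤ 1+2*n*x := by
  intro n
  induction n with
  | zero => intro _; norm_num
  | succ k ih =>
    intro hkx
    have hk : 2*(k:ℝ)*x ≤ 1 := by
      have : (k:ℝ) ≤ (k:ℝ)+1 := by linarith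
      push_cast at hkx ⊢
      nlinarith
    have h2 := ih hk
    have hx2 : 2*(k:ℝ)*x*x ≤ x := by
      nlinarith
    calc (1+x)^(k+1) = (1+x)^k * (1+x) := by rw [pow_succ]
      _ ≤ (1+2*k*x) * (1+x) := by nlinarith
      _ = 1 + (2*k+1)*x + 2*k*x*x := by ring
      _ ≤ 1+2*(k+1)*x := by push_cast; nlinarith
      _ = 1+2*((k:ℕ)+1:ℝ)*x := by norm_num
      _ = 1+2*(((k+1:ℕ)):ℝ)*x := by push_cast; ring

set_option maxHeartbeats 2000000 in
theorem main (n : ℕ) (hn : 1 ≤ n) :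
    (∃ c C : ℝ, 0 < c ∧ c ≤ C ∧ ∃ α₀ ∈ Set.Ioo (0 : ℝ) 1,
      ∀ α ∈ Set.Ioo α₀ 1,
        ENNReal.ofReal (c * (1 / α - 1) ^ ((n : ℝ)⁻¹)) ≤ CHLc n α - 1 ∧
        CHLc n α - 1 ≤ ENNReal.ofReal (C * (1 / α - 1) ^ ((n : ℝ)⁻¹))) ∧
    Filter.Tendsto (CHLc n) (nhdsWithin 1 (Set.Iio 1)) (nhds 1) := by
  have hnR : (1:ℝ) ≤ (n:ℝ) := by exact_mod_cast hn
  have hn0 : ((n:ℕ):ℝ) ≠ 0 := by positivity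
  set Cn : ℝ := 2^n * ((n:ℝ)+2)^n with hCndef
  have hCn0 : 0 < Cn := by positivity
  set c : ℝ := 1 / (4 * Cn) with hcdef
  set C : ℝ := 8 * n with hCdef
  have hc0 : 0 < c := by positivity
  have hcC : c ≤ C := by
    rw [hcdef, hCdef]
    have h1 : (1:ℝ) ≤ 4 * Cn := by
      rw [hCndef]
      nlinarith [one_le_pow₀ (show (1:ℝ) ≤ (n:ℝ)+2 by linarith) (n := n),
        one_le_pow₀ (show (1:ℝ) ≤ (2:ℝ) by norm_num) (n := n)]
    have h2 : 1/(4*Cn) ≤ 1 := by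
      rw [div_le_one (by positivity)]
      exact h1
    linarith
  set α₀ : ℝ := 1 - (1/(8*(n:ℝ)))^n with hα₀def
  have h8n : (0:ℝ) < 1/(8*(n:ℝ)) := by positivity
  have h8n' : (1/(8*(n:ℝ)))^n ≤ 1/8 := by
    calc (1/(8*(n:ℝ)))^n ≤ (1/8:ℝ)^n := by
          apply pow_le_pow_left₀ h8n.le
          rw [div_le_div_iff₀ (by positivity) (by norm_num)]
          nlinarith
      _ ≤ (1/8:ℝ)^1 := pow_le_pow_of_le_one (by norm_num) (by norm_num) hn
      _ = 1/8 := pow_one _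
  have hα₀mem : α₀ ∈ Set.Ioo (0:ℝ) 1 := by
    constructor
    · rw [hα₀def]; linarith
    · rw [hα₀def]
      have : (0:ℝ) < (1/(8*(n:ℝ)))^n := by positivity
      linarith
  -- the two-sided bound for α ∈ (α₀, 1)
  have hbounds : ∀ α ∈ Set.Ioo α₀ 1,
      ENNReal.ofReal (c * (1 / α - 1) ^ ((n : ℝ)⁻¹)) ≤ CHLc n α - 1 ∧
      CHLc n α - 1 ≤ ENNReal.ofReal (C * (1 / α - 1) ^ ((n : ℝ)⁻¹)) := by
    intro α hα
    have hα1 : α < 1 := hα.2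
    have hα₀α : α₀ < α := hα.1
    have hαhalf : 1/2 ≤ α := by
      have := hα₀mem
      rw [hα₀def] at hα₀α
      linarith [h8n']
    have hα0 : 0 < α := by linarith
    have h1α : 0 < 1 - α := by linarith
    have hinv : 0 < 1/α - 1 := by
      rw [lt_sub_iff_add_lt, zero_add, lt_div_iff₀ hα0, one_mul]
      exact hα1
    have hle2 : 1/α - 1 ≤ 2*(1-α) := by
      rw [div_sub' hα0.ne', div_le_iff₀ hα0]
      nlinarith
    constructor
    · -- lower bound
      have hlow := CHLc_lower hn hαhalf hα1
      have hreal : c * (1 / α - 1) ^ ((n : ℝ)⁻¹)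
          ≤ ((1-α)/2) ^ ((n:ℝ)⁻¹) / Cn := by
        have h4 : (1/α - 1) ^ ((n : ℝ)⁻¹) ≤ (2*(1-α)) ^ ((n:ℝ)⁻¹) :=
          Real.rpow_le_rpow hinv.le hle2 (by positivity)
        have h5 : (2*(1-α)) ^ ((n:ℝ)⁻¹) = (4:ℝ)^((n:ℝ)⁻¹) * ((1-α)/2) ^ ((n:ℝ)⁻¹) := by
          rw [← Real.mul_rpow (by norm_num) (by positivity)]
          congr 1
          ring
        have h6 : (4:ℝ)^((n:ℝ)⁻¹) ≤ 4 := by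
          calc (4:ℝ)^((n:ℝ)⁻¹) ≤ (4:ℝ)^(1:ℝ) :=
              Real.rpow_le_rpow_of_exponent_le (by norm_num)
                (by rw [inv_le_one_iff₀]; right; exact hnR)
            _ = 4 := Real.rpow_one 4
        have h7 : (1/α - 1) ^ ((n : ℝ)⁻¹) ≤ 4 * ((1-α)/2) ^ ((n:ℝ)⁻¹) := by
          refine h4.trans ?_
          rw [h5]
          exact mul_le_mul_of_nonneg_right h6 (by positivity)
        rw [hcdef]
        rw [div_mul_eq_mul_div, one_mul, div_le_div_iff₀ (by positivity) hCn0]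
        nlinarith [Real.rpow_nonneg (show (0:ℝ) ≤ (1-α)/2 by linarith) ((n:ℝ)⁻¹)]
      refine le_trans (ENNReal.ofReal_le_ofReal hreal) ?_
      rw [← hCndef] at hlow
      exact (ENNReal.cancel_of_ne ENNReal.one_ne_top).le_tsub_of_add_le_left hlow
    · -- upper bound
      set d : ℝ := (1-α) ^ ((n:ℝ)⁻¹) with hddef
      have hd0 : 0 < d := Real.rpow_pos_of_pos h1α _
      have hdsmall : d < 1/(8*(n:ℝ)) := by
        rw [hddef]
        have h4 : 1 - α < (1/(8*(n:ℝ)))^n := by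
          rw [hα₀def] at hα₀α
          linarith
        calc (1-α) ^ ((n:ℝ)⁻¹) < ((1/(8*(n:ℝ)))^n) ^ ((n:ℝ)⁻¹) :=
            Real.rpow_lt_rpow h1α.le h4 (by positivity)
          _ = 1/(8*(n:ℝ)) := by
            rw [← Real.rpow_natCast (1/(8*(n:ℝ))) n, ← Real.rpow_mul h8n.le,
              mul_inv_cancel₀ hn0, Real.rpow_one]
      have hd1 : d < 1 := lt_of_lt_of_le hdsmall (by
        rw [div_le_one (by positivity)]; nlinarith)
      have hdhalf : d ≤ 1/2 := le_trans hdsmall.le (by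
        rw [div_le_div_iff₀ (by positivity) (by norm_num)]; nlinarith)
      have hup := CHLc_upper hn hα0 hα1
      rw [← hddef] at hup
      have hx0 : (0:ℝ) ≤ 2/(1-d) - 1 := by
        rw [sub_nonneg, le_div_iff₀ (by linarith)]
        linarith
      rw [← ENNReal.ofReal_pow hx0] at hup
      have hfactor : 2/(1-d) - 1 ≤ 1 + 4*d := by
        rw [div_sub' (by linarith : (1:ℝ)-d ≠ 0), div_le_iff₀ (by linarith)]
        nlinarith
      have hpow : (2/(1-d) - 1)^n ≤ 1 + 8*(n:ℝ)*d := by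
        have h4 : (2/(1-d) - 1)^n ≤ (1+4*d)^n := by
          apply pow_le_pow_left₀ ?_ hfactor
          rw [sub_nonneg, le_div_iff₀ (by linarith)]
          linarith
        have h5 : (1+4*d)^n ≤ 1+2*(n:ℝ)*(4*d) := by
          refine pow_one_add_le (4*d) (by positivity) n ?_
          rw [lt_div_iff₀ (by positivity)] at hdsmall
          nlinarith
        calc (2/(1-d) - 1)^n ≤ 1+2*(n:ℝ)*(4*d) := h4.trans h5
          _ = 1 + 8*(n:ℝ)*d := by ring
      have hup2 : CHLc n α ≤ 1 + ENNReal.ofReal (8*(n:ℝ)*d) := by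
        refine hup.trans ?_
        calc ENNReal.ofReal ((2/(1-d) - 1)^n) ≤ ENNReal.ofReal (1 + 8*(n:ℝ)*d) :=
            ENNReal.ofReal_le_ofReal hpow
          _ = 1 + ENNReal.ofReal (8*(n:ℝ)*d) := by
            rw [ENNReal.ofReal_add (by norm_num) (by positivity), ENNReal.ofReal_one]
      have hdle : d ≤ (1/α - 1) ^ ((n:ℝ)⁻¹) := by
        rw [hddef]
        refine Real.rpow_le_rpow h1α.le ?_ (by positivity)
        have : 1/α - 1 = (1-α)/α := by field_simp
        rw [this, le_div_iff₀ hα0]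
        nlinarith
      calc CHLc n α - 1 ≤ (1 + ENNReal.ofReal (8*(n:ℝ)*d)) - 1 :=
          tsub_le_tsub_right hup2 1
        _ = ENNReal.ofReal (8*(n:ℝ)*d) := by
          rw [add_comm, ENNReal.add_sub_cancel_right ENNReal.one_ne_top]
        _ ≤ ENNReal.ofReal (C * (1 / α - 1) ^ ((n : ℝ)⁻¹)) := by
          apply ENNReal.ofReal_le_ofReal
          rw [hCdef]
          exact mul_le_mul_of_nonneg_left hdle (by positivity : (0:ℝ) ≤ 8*(n:ℝ))
  refine ⟨⟨c, C, hc0, hcC, α₀, hα₀mem, hbounds⟩, ?_⟩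
  -- the limit
  have hmem : Set.Ioo α₀ (1:ℝ) ∈ nhdsWithin (1:ℝ) (Set.Iio 1) :=
    Ioo_mem_nhdsLT_of_mem ⟨hα₀mem.2, le_rfl⟩
  have hupper_ev : ∀ᶠ α in nhdsWithin (1:ℝ) (Set.Iio 1),
      CHLc n α ≤ 1 + ENNReal.ofReal (C * (1 / α - 1) ^ ((n : ℝ)⁻¹)) := by
    filter_upwards [hmem] with α hα
    have h2 := (hbounds α hα).2
    calc CHLc n α ≤ (CHLc n α - 1) + 1 := le_tsub_add
      _ ≤ ENNReal.ofReal (C * (1 / α - 1) ^ ((n : ℝ)⁻¹)) + 1 := add_le_add_left h2 1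
      _ = 1 + ENNReal.ofReal (C * (1 / α - 1) ^ ((n : ℝ)⁻¹)) := add_comm _ _
  have hlower_ev : ∀ᶠ α in nhdsWithin (1:ℝ) (Set.Iio 1), (1:ℝ≥0∞) ≤ CHLc n α := by
    filter_upwards [hmem] with α hα
    have h2 := (hbounds α hα).1
    by_contra hcc
    push_neg at hcc
    have h3 : CHLc n α - 1 = 0 := by
      rw [tsub_eq_zero_iff_le]
      exact hcc.le
    rw [h3] at h2
    have h4 : ENNReal.ofReal (c * (1 / α - 1) ^ ((n : ℝ)⁻¹)) ≠ 0 := by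
      rw [ne_eq, ENNReal.ofReal_eq_zero, not_le]
      have hα1 : α < 1 := hα.2
      have hα0 : 0 < α := by
        have := hα.1
        rw [hα₀def] at this
        linarith [h8n']
      have hinv : 0 < 1/α - 1 := by
        rw [lt_sub_iff_add_lt, zero_add, lt_div_iff₀ hα0, one_mul]
        exact hα1
      positivity
    exact h4 (le_antisymm h2 zero_le)
  have hlim_upper : Filter.Tendsto (fun α => 1 + ENNReal.ofReal (C * (1 / α - 1) ^ ((n : ℝ)⁻¹)))
      (nhdsWithin (1:ℝ) (Set.Iio 1)) (nhds 1) := by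
    have h1 : Filter.Tendsto (fun α : ℝ => 1/α - 1) (nhdsWithin (1:ℝ) (Set.Iio 1)) (nhds 0) := by
      have hcont : ContinuousAt (fun α : ℝ => 1/α - 1) 1 :=
        ((continuousAt_const.div continuousAt_id one_ne_zero)).sub continuousAt_const
      have h5 := hcont.tendsto
      norm_num at h5
      simp only [one_div]
      exact h5.mono_left nhdsWithin_le_nhds
    have h2 : Filter.Tendsto (fun y : ℝ => y ^ ((n:ℝ)⁻¹)) (nhds 0) (nhds 0) := by
      have hcont := Real.continuousAt_rpow_const 0 ((n:ℝ)⁻¹)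
        (Or.inr (by positivity))
      have := hcont.tendsto
      rwa [Real.zero_rpow (by positivity)] at this
    have h3 : Filter.Tendsto (fun α : ℝ => C * (1/α - 1) ^ ((n:ℝ)⁻¹))
        (nhdsWithin (1:ℝ) (Set.Iio 1)) (nhds 0) := by
      have := (h2.comp h1).const_mul C
      rwa [mul_zero] at this
    have h4 : Filter.Tendsto (fun α : ℝ => ENNReal.ofReal (C * (1/α - 1) ^ ((n:ℝ)⁻¹)))
        (nhdsWithin (1:ℝ) (Set.Iio 1)) (nhds 0) := by
      have := (ENNReal.continuous_ofReal.tendsto 0).comp h3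
      rwa [ENNReal.ofReal_zero] at this
    have := h4.const_add (1:ℝ≥0∞)
    rwa [add_zero] at this
  exact tendsto_of_tendsto_of_tendsto_of_le_of_le' tendsto_const_nhds hlim_upper
    hlower_ev hupper_ev

end Solyanik


theorem uncentered_cube_solyanik_sharp (n : ℕ) (hn : 1 ≤ n) :
    (∃ c C : ℝ, 0 < c ∧ c ≤ C ∧ ∃ α₀ ∈ Set.Ioo (0 : ℝ) 1,
      ∀ α ∈ Set.Ioo α₀ 1,
        ENNReal.ofReal (c * (1 / α - 1) ^ ((n : ℝ)⁻¹)) ≤ CHLc n α - 1 ∧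
        CHLc n α - 1 ≤ ENNReal.ofReal (C * (1 / α - 1) ^ ((n : ℝ)⁻¹))) ∧
    Filter.Tendsto (CHLc n) (nhdsWithin 1 (Set.Iio 1)) (nhds 1) :=
  Solyanik.main n hn
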